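/- arXiv:2312.13003 — 2 statements merged into one kernel-verified Lean document; each statement's English description precedes it below -/
import Mathlib

section
/- Let E be a strongly archimedean convex SEA with property A which has the b-comparability property (with respect to its canonical compression base). Then for all a,b∈E, aCb implies a|b. -/
universe u

/-- An effect algebra: the partially defined sum `⊕` is encoded via `Option`. -/
class EffectAlgebra (E : Type u) where
  oplus : E → E → Option E
  zero : E
  one : E
  oplus_comm : ∀ a b : E, oplus a b = oplus b a
  oplus_assoc : ∀ {a b c ab abc : E}, oplus a b = some ab → oplus ab c = some abc →
    ∃ bc : E, oplus b c = some bc ∧ oplus a bc = some abc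
  exists_perp : ∀ a : E, ∃ b : E, oplus a b = some one
  perp_unique : ∀ {a b c : E}, oplus a b = some one → oplus a c = some one → b = c
  oplus_one : ∀ {a b : E}, oplus a one = some b → a = zero

namespace EffectAlgebra

variable {E : Type u} [EffectAlgebra E]

/-- The orthosupplement `a^⊥`. -/
noncomputable def perp (a : E) : E := Classical.choose (exists_perp a)

/-- The partial order: `a ≤ b` iff `a ⊕ c = b` for some `c`. -/
def le (a b : E) : Prop := ∃ c : E, oplus a c = some b

/-- Sharp elements. -/
def Sharp (a : E) : Prop := ∀ x : E, le x a → le x (perp a) → x = zero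

/-- Finite orthosums of lists of elements. -/
def osum : List E → Option E
  | [] => some zero
  | a :: l => (osum l).bind fun s => oplus a s

/-- Mackey compatibility `a ↔ b`. -/
def MCompat (a b : E) : Prop :=
  ∃ a₁ b₁ c s t : E, oplus a₁ b₁ = some s ∧ oplus s c = some t ∧
    oplus a₁ c = some a ∧ oplus b₁ c = some b

/-- `a` is the supremum of the sequence `f`. -/
def IsSupSeq (f : ℕ → E) (a : E) : Prop :=
  (∀ n, le (f n) a) ∧ ∀ b : E, (∀ n, le (f n) b) → le a b

/-- `a` is the infimum of the sequence `f`. -/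
def IsInfSeq (f : ℕ → E) (a : E) : Prop :=
  (∀ n, le a (f n)) ∧ ∀ b : E, (∀ n, le b (f n)) → le b a

/-- `a` is the infimum of the set `S`. -/
def IsInfSet (S : Set E) (a : E) : Prop :=
  (∀ x ∈ S, le a x) ∧ ∀ b : E, (∀ x ∈ S, le b x) → le b a

/-- `a` is the supremum of `f` computed inside the subset `S`. -/
def IsSupSeqIn (S : Set E) (f : ℕ → E) (a : E) : Prop :=
  a ∈ S ∧ (∀ n, le (f n) a) ∧ ∀ b ∈ S, (∀ n, le (f n) b) → le a b

variable (E) in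
/-- Monotone σ-completeness: every ascending sequence has a supremum. -/
def MonotoneSigmaComplete : Prop :=
  ∀ f : ℕ → E, (∀ n, le (f n) (f (n + 1))) → ∃ a : E, IsSupSeq f a

end EffectAlgebra

open EffectAlgebra in
/-- A compression base `(J_p)_{p ∈ P}` on an effect algebra. -/
structure CompressionBase (E : Type u) [EffectAlgebra E] where
  P : Set E
  J : E → E → E
  zero_mem : zero ∈ P
  one_mem : one ∈ P
  perp_mem : ∀ p ∈ P, perp p ∈ P
  oplus_mem : ∀ p ∈ P, ∀ q ∈ P, ∀ r : E, oplus p q = some r → r ∈ P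
  normal : ∀ e f d s t x y : E, oplus e f = some s → oplus s d = some t →
    oplus e d = some x → x ∈ P → oplus f d = some y → y ∈ P → d ∈ P
  additive : ∀ p ∈ P, ∀ a b c : E, oplus a b = some c →
    oplus (J p a) (J p b) = some (J p c)
  retraction : ∀ p ∈ P, ∀ a : E, le a p → J p a = a
  focus : ∀ p ∈ P, J p one = p
  compression : ∀ p ∈ P, ∀ a : E, (J p a = zero ↔ le a (perp p))
  compose : ∀ p ∈ P, ∀ q ∈ P, ∀ r ∈ P, ∀ s t qr : E,
    oplus p q = some s → oplus s r = some t → oplus q r = some qr →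
    ∀ a : E, J s (J qr a) = J q a

namespace CompressionBase

open EffectAlgebra

variable {E : Type u} [EffectAlgebra E] (cb : CompressionBase E)

/-- The commutant `C(p)` of a projection `p`. -/
noncomputable def Cset (p : E) : Set E :=
  {a : E | oplus (cb.J p a) (cb.J (perp p) a) = some a}

/-- `PC(a)`: projections compatible with `a`. -/
noncomputable def PC (a : E) : Set E := {p : E | p ∈ cb.P ∧ a ∈ cb.Cset p}

/-- The P-bicommutant `P(a) = PC(PC(a) ∪ {a})`. -/
noncomputable def Pbicomm (a : E) : Set E :=
  {p : E | p ∈ cb.P ∧ a ∈ cb.Cset p ∧ ∀ q ∈ cb.PC a, q ∈ cb.Cset p}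

/-- `p` is the projection cover of `a`. -/
def IsProjCover (a p : E) : Prop :=
  p ∈ cb.P ∧ ∀ q ∈ cb.P, (le a q ↔ le p q)

/-- The projection cover property. -/
def ProjCoverProp : Prop := ∀ a : E, ∃ p : E, cb.IsProjCover a p

/-- `B` is a Boolean subalgebra of the set of projections. -/
noncomputable def BooleanSub (B : Set E) : Prop :=
  B ⊆ cb.P ∧ zero ∈ B ∧ one ∈ B ∧ (∀ p ∈ B, perp p ∈ B) ∧
  (∀ p ∈ B, ∀ q ∈ B, MCompat p q) ∧
  (∀ p ∈ B, ∀ q ∈ B, ∀ r : E, oplus p q = some r → r ∈ B)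

/-- The b-property. -/
noncomputable def BProperty : Prop :=
  ∀ a : E, ∃ B : Set E, cb.BooleanSub B ∧
    ∀ p ∈ cb.P, (a ∈ cb.Cset p ↔ ∀ b ∈ B, b ∈ cb.Cset p)

/-- Commutativity `aCb` of b-elements. -/
noncomputable def CommuteC (a b : E) : Prop :=
  ∀ p ∈ cb.Pbicomm a, ∀ q ∈ cb.Pbicomm b, MCompat p q

/-- The b-comparability property. -/
noncomputable def BComparability : Prop :=
  cb.BProperty ∧
  ∀ e f : E, cb.CommuteC e f → ∃ p : E, p ∈ cb.Pbicomm e ∧ p ∈ cb.Pbicomm f ∧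
    le (cb.J p e) (cb.J p f) ∧ le (cb.J (perp p) f) (cb.J (perp p) e)

/-- Spectrality: projection cover property plus b-comparability. -/
noncomputable def Spectral : Prop := cb.ProjCoverProp ∧ cb.BComparability

/-- `p` is the floor of `a` (the largest projection below `a`). -/
def IsFloor (a p : E) : Prop :=
  p ∈ cb.P ∧ le p a ∧ ∀ q ∈ cb.P, le q a → le q p

end CompressionBase

open EffectAlgebra in
/-- A sequential effect algebra (SEA). -/
class SEA (E : Type u) [EffectAlgebra E] where
  seq : E → E → E
  seq_oplus : ∀ a b c d : E, oplus b c = some d →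
    oplus (seq a b) (seq a c) = some (seq a d)
  one_seq : ∀ a : E, seq one a = a
  seq_zero_symm : ∀ a b : E, seq a b = zero → seq b a = zero
  comm_perp : ∀ a b : E, seq a b = seq b a → seq a (perp b) = seq (perp b) a
  comm_assoc : ∀ a b c : E, seq a b = seq b a → seq a (seq b c) = seq (seq a b) c
  comm_seq : ∀ a b c : E, seq c a = seq a c → seq c b = seq b c →
    seq c (seq a b) = seq (seq a b) c
  comm_oplus : ∀ a b c d : E, seq c a = seq a c → seq c b = seq b c →
    oplus a b = some d → seq c d = seq d c

namespace EffectAlgebra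

variable {E : Type u} [EffectAlgebra E]

section SEAdefs

variable [SEA E]

/-- `a | b` : the sequential product commutes. -/
def Commutes (a b : E) : Prop := SEA.seq a b = SEA.seq b a

/-- The commutant `S'` of a subset. -/
def commutant (S : Set E) : Set E := {a : E | ∀ s ∈ S, Commutes a s}

/-- The bicommutant `S''`. -/
def bicommutant (S : Set E) : Set E := commutant (commutant S)

/-- A sub-SEA: a sub-effect algebra closed under the sequential product. -/
noncomputable def SubSEA (S : Set E) : Prop :=
  zero ∈ S ∧ one ∈ S ∧ (∀ a ∈ S, perp a ∈ S) ∧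
  (∀ a ∈ S, ∀ b ∈ S, ∀ c : E, oplus a b = some c → c ∈ S) ∧
  (∀ a ∈ S, ∀ b ∈ S, SEA.seq a b ∈ S)

/-- A commutative sub-SEA. -/
noncomputable def CommSubSEA (S : Set E) : Prop :=
  SubSEA S ∧ ∀ a ∈ S, ∀ b ∈ S, Commutes a b

/-- A maximal commutative sub-SEA. -/
noncomputable def MaxCommSubSEA (S : Set E) : Prop :=
  CommSubSEA S ∧ ∀ T : Set E, CommSubSEA T → S ⊆ T → T = S

/-- `C(p)` for the canonical compression base `J_p = p ∘ ·` of a SEA. -/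
noncomputable def sC (p : E) : Set E :=
  {a : E | oplus (SEA.seq p a) (SEA.seq (perp p) a) = some a}

/-- `PC(a)` for the canonical compression base. -/
noncomputable def sPC (a : E) : Set E := {p : E | Sharp p ∧ a ∈ sC p}

/-- The P-bicommutant `P(a)` for the canonical compression base. -/
noncomputable def sPbicomm (a : E) : Set E :=
  {p : E | Sharp p ∧ a ∈ sC p ∧ ∀ q ∈ sPC a, q ∈ sC p}

/-- `p` is the projection cover of `a` (canonical compression base). -/
noncomputable def sIsProjCover (a p : E) : Prop :=
  Sharp p ∧ ∀ q : E, Sharp q → (le a q ↔ le p q)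

variable (E) in
/-- The projection cover property (canonical compression base). -/
noncomputable def sProjCoverProp : Prop := ∀ a : E, ∃ p : E, sIsProjCover a p

/-- `B` is a Boolean subalgebra of the sharp elements. -/
noncomputable def sBooleanSub (B : Set E) : Prop :=
  (∀ p ∈ B, Sharp p) ∧ zero ∈ B ∧ one ∈ B ∧ (∀ p ∈ B, perp p ∈ B) ∧
  (∀ p ∈ B, ∀ q ∈ B, MCompat p q) ∧
  (∀ p ∈ B, ∀ q ∈ B, ∀ r : E, oplus p q = some r → r ∈ B)

variable (E) in
/-- The b-property (canonical compression base). -/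
noncomputable def sBProperty : Prop :=
  ∀ a : E, ∃ B : Set E, sBooleanSub B ∧
    ∀ p : E, Sharp p → (a ∈ sC p ↔ ∀ b ∈ B, b ∈ sC p)

/-- `aCb` (canonical compression base). -/
noncomputable def sCommuteC (a b : E) : Prop :=
  ∀ p ∈ sPbicomm a, ∀ q ∈ sPbicomm b, MCompat p q

variable (E) in
/-- The b-comparability property (canonical compression base). -/
noncomputable def sBComparability : Prop :=
  sBProperty E ∧
  ∀ e f : E, sCommuteC e f → ∃ p : E, p ∈ sPbicomm e ∧ p ∈ sPbicomm f ∧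
    le (SEA.seq p e) (SEA.seq p f) ∧
    le (SEA.seq (perp p) f) (SEA.seq (perp p) e)

variable (E) in
/-- Spectrality of a SEA with respect to its canonical compression base. -/
noncomputable def sSpectral : Prop := sProjCoverProp E ∧ sBComparability E

/-- `p` is the floor of `a` (canonical compression base). -/
noncomputable def sIsFloor (a p : E) : Prop :=
  Sharp p ∧ le p a ∧ ∀ q : E, Sharp q → le q a → le q p

variable (E) in
/-- Property A. -/
def PropertyA : Prop :=
  ∀ (f : ℕ → E) (a b : E), (∀ n, le (f n) (f (n + 1))) →
    (∀ m n, Commutes (f m) (f n)) → IsSupSeq f a →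
    (∀ n, Commutes (f n) b) → Commutes a b

variable (E) in
/-- A σ-SEA. -/
def SigmaSEA : Prop :=
  MonotoneSigmaComplete E ∧
  ∀ (f : ℕ → E) (m : E), (∀ n, le (f (n + 1)) (f n)) → IsInfSeq f m →
    ∀ b : E, IsInfSeq (fun n => SEA.seq b (f n)) (SEA.seq b m) ∧
      ((∀ n, Commutes b (f n)) → Commutes b m)

/-- Iterated sequential powers: `seqPow a n = a^(n+1)`. -/
def seqPow (a : E) : ℕ → E
  | 0 => a
  | n + 1 => SEA.seq a (seqPow a n)

end SEAdefs

end EffectAlgebra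

open EffectAlgebra in
/-- A convex effect algebra: scalar multiplication by reals in `[0,1]`. -/
class ConvexEA (E : Type u) [EffectAlgebra E] where
  smul : ℝ → E → E
  smul_smul : ∀ (l m : ℝ) (a : E), 0 ≤ l → l ≤ 1 → 0 ≤ m → m ≤ 1 →
    smul m (smul l a) = smul (l * m) a
  smul_add_coeff : ∀ (l m : ℝ) (a : E), 0 ≤ l → 0 ≤ m → l + m ≤ 1 →
    oplus (smul l a) (smul m a) = some (smul (l + m) a)
  smul_oplus : ∀ (l : ℝ) (a b c : E), 0 ≤ l → l ≤ 1 → oplus a b = some c →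
    oplus (smul l a) (smul l b) = some (smul l c)
  one_smul : ∀ a : E, smul 1 a = a

namespace EffectAlgebra

variable {E : Type u} [EffectAlgebra E]

section Convexdefs

variable [ConvexEA E]

variable (E) in
/-- Strong archimedeanity. -/
def StronglyArchimedean : Prop :=
  ∀ a b c : E,
    (∀ n : ℕ, ∃ d : E, oplus b (ConvexEA.smul (1 / (n + 1) : ℝ) c) = some d ∧ le a d) →
    le a b

/-- `DistLE a b ε` encodes `‖a - b‖ ≤ ε` in the order unit norm:
`(1/2)a ≤ (1/2)b ⊕ (ε/2)1` and symmetrically (with `ε` clamped to `[0,1]`). -/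
def DistLE (a b : E) (ε : ℝ) : Prop :=
  (∃ d : E, oplus (ConvexEA.smul (2⁻¹ : ℝ) b) (ConvexEA.smul (min ε 1 / 2) one) = some d ∧
    le (ConvexEA.smul (2⁻¹ : ℝ) a) d) ∧
  (∃ d : E, oplus (ConvexEA.smul (2⁻¹ : ℝ) a) (ConvexEA.smul (min ε 1 / 2) one) = some d ∧
    le (ConvexEA.smul (2⁻¹ : ℝ) b) d)

/-- Norm convergence of a sequence. -/
def NormLimit (f : ℕ → E) (a : E) : Prop :=
  ∀ ε : ℝ, 0 < ε → ∃ N : ℕ, ∀ n ≥ N, DistLE (f n) a ε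

/-- Cauchy sequences with respect to the order unit norm. -/
def CauchySeqE (f : ℕ → E) : Prop :=
  ∀ ε : ℝ, 0 < ε → ∃ N : ℕ, ∀ m ≥ N, ∀ n ≥ N, DistLE (f m) (f n) ε

variable (E) in
/-- Norm completeness. -/
def NormComplete : Prop := ∀ f : ℕ → E, CauchySeqE f → ∃ a : E, NormLimit f a

/-- A norm-closed subset. -/
def NormClosedSet (S : Set E) : Prop :=
  ∀ (f : ℕ → E) (a : E), (∀ n, f n ∈ S) → NormLimit f a → a ∈ S

/-- A norm-complete subset. -/
def NormCompleteSet (S : Set E) : Prop :=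
  ∀ f : ℕ → E, (∀ n, f n ∈ S) → CauchySeqE f → ∃ a ∈ S, NormLimit f a

/-- One-dimensional elements. -/
def OneDim (a : E) : Prop :=
  ∀ b : E, le b a → ∃ t : ℝ, 0 ≤ t ∧ t ≤ 1 ∧ b = ConvexEA.smul t a

/-- `l` is a representation of `a` as a simple element:
`a = ⊕ μ_i p_i` with `μ_i ∈ [0,1]`, `p_i` sharp and `⊕ p_i = 1`. -/
noncomputable def SimpleRep (a : E) (l : List (ℝ × E)) : Prop :=
  (∀ x ∈ l, x.1 ∈ Set.Icc (0 : ℝ) 1 ∧ Sharp x.2) ∧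
  osum (l.map Prod.snd) = some one ∧
  osum (l.map fun x => ConvexEA.smul x.1 x.2) = some a

/-- Simple elements. -/
noncomputable def SimpleElem (a : E) : Prop := ∃ l : List (ℝ × E), SimpleRep a l

/-- A reduced representation: strictly increasing coefficients, nonzero sharp elements. -/
noncomputable def ReducedRep (a : E) (l : List (ℝ × E)) : Prop :=
  SimpleRep a l ∧ (l.map Prod.fst).Chain' (· < ·) ∧ ∀ x ∈ l, x.2 ≠ zero

end Convexdefs

section SpecRes

variable [SEA E] [ConvexEA E]

/-- `p` is the spectral resolution of `a` (canonical compression base): a family of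
projections in the bicommutant of `a`, nondecreasing and right continuous on `[0,1]`,
with `J_{p_λ}(a) ≤ λ p_λ` and `λ p_λ^⊥ ≤ J_{p_λ^⊥}(a)`. -/
noncomputable def sIsSpecRes (a : E) (p : ℝ → E) : Prop :=
  (∀ l : ℝ, 0 ≤ l → l ≤ 1 → p l ∈ sPbicomm a) ∧
  (∀ l m : ℝ, 0 ≤ l → l ≤ m → m ≤ 1 → le (p l) (p m)) ∧
  (∀ l : ℝ, 0 ≤ l → l < 1 →
    IsInfSet {x : E | ∃ m : ℝ, l < m ∧ m ≤ 1 ∧ x = p m} (p l)) ∧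
  (∀ l : ℝ, 0 ≤ l → l ≤ 1 →
    le (SEA.seq (p l) a) (ConvexEA.smul l (p l)) ∧
    le (ConvexEA.smul l (perp (p l))) (SEA.seq (perp (p l)) a))

end SpecRes

end EffectAlgebra

namespace CompressionBase

open EffectAlgebra

variable {E : Type u} [EffectAlgebra E] [ConvexEA E] (cb : CompressionBase E)

/-- `p` is the spectral resolution of `a` with respect to the compression base `cb`. -/
noncomputable def IsSpecRes (a : E) (p : ℝ → E) : Prop :=
  (∀ l : ℝ, 0 ≤ l → l ≤ 1 → p l ∈ cb.Pbicomm a) ∧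
  (∀ l m : ℝ, 0 ≤ l → l ≤ m → m ≤ 1 → le (p l) (p m)) ∧
  (∀ l : ℝ, 0 ≤ l → l < 1 →
    IsInfSet {x : E | ∃ m : ℝ, l < m ∧ m ≤ 1 ∧ x = p m} (p l)) ∧
  (∀ l : ℝ, 0 ≤ l → l ≤ 1 →
    le (cb.J (p l) a) (ConvexEA.smul l (p l)) ∧
    le (ConvexEA.smul l (perp (p l))) (cb.J (perp (p l)) a))

end CompressionBase

section Aux
namespace EffectAlgebra

variable {E : Type u} [EffectAlgebra E]

lemma perp_spec (a : E) : oplus a (perp a) = some one := Classical.choose_spec (exists_perp a)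

lemma perp_eq {a b : E} (h : oplus a b = some one) : perp a = b :=
  perp_unique (perp_spec a) h

lemma perp_perp (a : E) : perp (perp a) = a :=
  perp_eq ((oplus_comm (perp a) a) ▸ perp_spec a)

lemma one_oplus_zero : oplus (one : E) zero = some one := by
  obtain ⟨b, hb⟩ := exists_perp (one : E)
  have hb' : oplus b one = some one := (oplus_comm one b) ▸ hb
  have := oplus_one hb'
  subst this; exact hb

lemma oplus_zero (a : E) : oplus a zero = some a := by
  have key : ∀ x : E, oplus (perp x) zero = some (perp x) := by
    intro x
    obtain ⟨bc, hbc, habc⟩ := oplus_assoc (perp_spec x) one_oplus_zero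
    have : perp x = bc := perp_unique (perp_spec x) habc
    rw [← this] at hbc; exact hbc
  have := key (perp a); rwa [perp_perp] at this

lemma zero_oplus (a : E) : oplus zero a = some a := (oplus_comm a zero) ▸ oplus_zero a

lemma perp_one : perp (one : E) = zero := perp_eq one_oplus_zero

lemma perp_zero : perp (zero : E) = one := by
  rw [← perp_one, perp_perp]

/-- reverse associativity -/
lemma oplus_assoc' {a b c bc abc : E} (h1 : oplus b c = some bc) (h2 : oplus a bc = some abc) :
    ∃ ab : E, oplus a b = some ab ∧ oplus ab c = some abc := by
  obtain ⟨u, hu, hcu⟩ := oplus_assoc ((oplus_comm b c) ▸ h1) ((oplus_comm a bc) ▸ h2)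
  exact ⟨u, (oplus_comm b a) ▸ hu, (oplus_comm c u) ▸ hcu⟩

lemma cancel {a b c d : E} (h1 : oplus a b = some d) (h2 : oplus a c = some d) : b = c := by
  have key : ∀ x y z : E, oplus x y = some z → oplus (perp z) x = some (perp y) := by
    intro x y z h
    obtain ⟨u, hu, hau⟩ := oplus_assoc h (perp_spec z)
    have hu' : perp x = u := perp_unique (perp_spec x) hau
    subst hu'
    obtain ⟨v, hv, hv2⟩ := oplus_assoc hu ((oplus_comm x (perp x)) ▸ perp_spec x)
    have : perp y = v := perp_unique (perp_spec y) hv2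
    rw [← this] at hv; exact hv
  have e1 := key a b d h1
  have e2 := key a c d h2
  rw [e1] at e2
  have : perp b = perp c := Option.some.inj e2
  have := congrArg perp this; rwa [perp_perp, perp_perp] at this

lemma le_refl (a : E) : le a a := ⟨zero, oplus_zero a⟩

lemma le_zero_left (a : E) : le zero a := ⟨a, zero_oplus a⟩

lemma le_one (a : E) : le a one := ⟨perp a, perp_spec a⟩

lemma eq_zero_of_le_zero {a : E} (h : le a zero) : a = zero := by
  obtain ⟨c, hc⟩ := h
  obtain ⟨bc, hbc, habc⟩ := oplus_assoc hc (zero_oplus one)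
  have hc0 : c = zero := oplus_one hbc
  subst hc0
  rw [oplus_zero a] at hc
  exact Option.some.inj hc

lemma le_trans {a b c : E} (h1 : le a b) (h2 : le b c) : le a c := by
  obtain ⟨x, hx⟩ := h1; obtain ⟨y, hy⟩ := h2
  obtain ⟨u, _, hu⟩ := oplus_assoc hx hy
  exact ⟨u, hu⟩

lemma le_antisymm {a b : E} (h1 : le a b) (h2 : le b a) : a = b := by
  obtain ⟨x, hx⟩ := h1; obtain ⟨y, hy⟩ := h2
  obtain ⟨u, hu, hau⟩ := oplus_assoc hx hy
  have : zero = u := cancel (oplus_zero a) hau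
  subst this
  have hx0 : x = zero := by
    have : le x zero := ⟨y, hu⟩
    exact eq_zero_of_le_zero this
  subst hx0
  have := oplus_zero a
  rw [this] at hx; exact Option.some.inj hx

end EffectAlgebra
end Aux
section Aux2
namespace EffectAlgebra

variable {E : Type u} [EffectAlgebra E]

lemma le_of_oplus {a b s : E} (h : oplus a b = some s) : le a s := ⟨b, h⟩

lemma le_of_oplus_right {a b s : E} (h : oplus a b = some s) : le b s :=
  ⟨a, (oplus_comm a b) ▸ h⟩

/-- if `a ⊕ b` is defined and `c ≤ b` then `a ⊕ c` is defined and below the total. -/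
lemma oplus_le_right {a b s c : E} (h : oplus a b = some s) (hc : le c b) :
    ∃ t : E, oplus a c = some t ∧ le t s := by
  obtain ⟨w, hw⟩ := hc
  obtain ⟨ab, hab, habw⟩ := oplus_assoc' hw h
  exact ⟨ab, hab, ⟨w, habw⟩⟩

lemma le_perp_of_oplus {a b c : E} (h : oplus a b = some c) : le b (perp a) := by
  obtain ⟨u, hu, hau⟩ := oplus_assoc h (perp_spec c)
  have : perp a = u := perp_unique (perp_spec a) hau
  subst this
  exact ⟨perp c, hu⟩

lemma le_perp_of_oplus' {a b c : E} (h : oplus a b = some c) : le a (perp b) :=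
  le_perp_of_oplus ((oplus_comm a b) ▸ h)

lemma oplus_defined_of_le_perp {a b : E} (h : le a (perp b)) : ∃ c, oplus a b = some c := by
  obtain ⟨w, hw⟩ := h
  have h2 : oplus (perp b) b = some one := (oplus_comm b (perp b)) ▸ perp_spec b
  obtain ⟨u, hu, _⟩ := oplus_assoc ((oplus_comm a w) ▸ hw) h2
  exact ⟨u, hu⟩

lemma perp_le_perp {a b : E} (h : le a b) : le (perp b) (perp a) := by
  obtain ⟨c, hc⟩ := h
  obtain ⟨u, hu, hau⟩ := oplus_assoc hc (perp_spec b)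
  have : perp a = u := perp_unique (perp_spec a) hau
  subst this
  exact ⟨c, (oplus_comm c (perp b)) ▸ hu⟩

lemma perp_le_perp_rev {a b : E} (h : le (perp b) (perp a)) : le a b := by
  have := perp_le_perp h; rwa [perp_perp, perp_perp] at this

lemma interchange {a b c d ab cd s : E} (h1 : oplus a b = some ab) (h2 : oplus c d = some cd)
    (h3 : oplus ab cd = some s) :
    ∃ ac bd : E, oplus a c = some ac ∧ oplus b d = some bd ∧ oplus ac bd = some s := by
  obtain ⟨u, hu, hau⟩ := oplus_assoc h1 h3
  obtain ⟨bc, hbc, hbcd⟩ := oplus_assoc' h2 hu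
  obtain ⟨bd, hbd, hcbd⟩ := oplus_assoc ((oplus_comm b c) ▸ hbc) hbcd
  obtain ⟨ac, hac, hacbd⟩ := oplus_assoc' hcbd hau
  exact ⟨ac, bd, hac, hbd, hacbd⟩

lemma oplus_le_oplus {a a' b b' s' : E} (ha : le a a') (hb : le b b')
    (h : oplus a' b' = some s') :
    ∃ s : E, oplus a b = some s ∧ le s s' := by
  obtain ⟨x, hx⟩ := ha; obtain ⟨y, hy⟩ := hb
  obtain ⟨ab, xy, hab, hxy, htot⟩ := interchange hx hy h
  exact ⟨ab, hab, ⟨xy, htot⟩⟩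

lemma le_of_oplus_le_oplus {a b b' s s' : E} (h : oplus a b = some s)
    (h' : oplus a b' = some s') (hb : le b b') : le s s' := by
  obtain ⟨s₀, h₀, hle⟩ := oplus_le_oplus (le_refl a) hb h'
  rw [h] at h₀
  exact (Option.some.inj h₀) ▸ hle

/-- cancellation for the order: `a ⊕ b = s`, `s ≤ s'`, `a ⊕ b' = s'` implies `b ≤ b'`. -/
lemma le_cancel {a b b' s s' : E} (h : oplus a b = some s) (h' : oplus a b' = some s')
    (hs : le s s') : le b b' := by
  obtain ⟨w, hw⟩ := hs
  obtain ⟨u, hu, hau⟩ := oplus_assoc h hw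
  have : b' = u := cancel h' hau
  subst this
  exact ⟨w, hu⟩

end EffectAlgebra
end Aux2
section Aux3
namespace EffectAlgebra

variable {E : Type u} [EffectAlgebra E]

/-- finite partial sums of a sequence -/
def psum (f : ℕ → E) : ℕ → Option E
  | 0 => some zero
  | n+1 => (psum f n).bind (fun s => oplus s (f n))

@[simp] lemma psum_zero (f : ℕ → E) : psum f 0 = some zero := rfl

lemma psum_succ (f : ℕ → E) (n : ℕ) :
    psum f (n+1) = (psum f n).bind (fun s => oplus s (f n)) := rfl

lemma psum_succ' {f : ℕ → E} {n : ℕ} {S : E} (h : psum f n = some S) :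
    psum f (n+1) = oplus S (f n) := by
  rw [psum_succ, h]; rfl

lemma psum_congr {f g : ℕ → E} {n : ℕ} (h : ∀ k < n, f k = g k) :
    psum f n = psum g n := by
  induction n with
  | zero => rfl
  | succ m ih =>
    rw [psum_succ, psum_succ, ih (fun k hk => h k (Nat.lt_succ_of_lt hk)),
      h m (Nat.lt_succ_self m)]

lemma psum_defined_pred {f : ℕ → E} {n : ℕ} {S : E} (h : psum f (n+1) = some S) :
    ∃ T, psum f n = some T ∧ oplus T (f n) = some S := by
  rw [psum_succ] at h
  cases hT : psum f n with
  | none => rw [hT] at h; simp at h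
  | some T => rw [hT] at h; exact ⟨T, rfl, h⟩

lemma psum_mono_defined {f : ℕ → E} {n : ℕ} {S : E} (h : psum f n = some S) :
    ∀ m ≤ n, ∃ T, psum f m = some T ∧ le T S := by
  induction n generalizing S with
  | zero =>
    intro m hm
    have : m = 0 := Nat.le_zero.mp hm
    subst this
    exact ⟨zero, rfl, by rw [psum_zero] at h; exact (Option.some.inj h) ▸ le_refl zero⟩
  | succ k ih =>
    intro m hm
    obtain ⟨T, hT, hTS⟩ := psum_defined_pred h
    rcases Nat.lt_or_ge m (k+1) with hlt | hge
    · obtain ⟨T', hT', hle⟩ := ih hT m (Nat.lt_succ_iff.mp hlt)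
      exact ⟨T', hT', le_trans hle (le_of_oplus hTS)⟩
    · have : m = k + 1 := Nat.le_antisymm hm hge
      subst this
      exact ⟨S, h, le_refl S⟩

lemma psum_mem_le {f : ℕ → E} {n : ℕ} {S : E} (h : psum f n = some S) {k : ℕ} (hk : k < n) :
    le (f k) S := by
  obtain ⟨T, hT, hTS⟩ := psum_mono_defined h (k+1) hk
  obtain ⟨T', hT', hadd⟩ := psum_defined_pred hT
  exact le_trans (le_of_oplus_right hadd) hTS

/-- elements of a defined partial sum are summable pairwise -/
lemma psum_orth {f : ℕ → E} {n : ℕ} {S : E} (h : psum f n = some S) {i j : ℕ}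
    (hi : i < n) (hj : j < n) (hij : i ≠ j) : le (f i) (perp (f j)) := by
  -- wlog i < j
  have key : ∀ i j : ℕ, i < j → j < n → le (f i) (perp (f j)) := by
    intro i j hij hjn
    obtain ⟨T, hT, hTS⟩ := psum_mono_defined h (j+1) hjn
    obtain ⟨T', hT', hadd⟩ := psum_defined_pred hT
    have h1 : le (f i) T' := psum_mem_le hT' hij
    have h2 : le T' (perp (f j)) := le_perp_of_oplus' hadd
    exact le_trans h1 h2
  rcases Nat.lt_or_ge i j with h1 | h1
  · exact key i j h1 hj
  · have : j < i := Nat.lt_of_le_of_ne h1 (Ne.symm hij)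
    have := key j i this hi
    have := perp_le_perp this
    rwa [perp_perp] at this

lemma psum_le_psum {f g : ℕ → E} {n : ℕ} {S : E} (h : psum f n = some S)
    (hle : ∀ k < n, le (g k) (f k)) :
    ∃ T, psum g n = some T ∧ le T S := by
  induction n generalizing S with
  | zero => exact ⟨zero, rfl, by rw [psum_zero] at h; exact (Option.some.inj h) ▸ le_refl zero⟩
  | succ m ih =>
    obtain ⟨F, hF, hadd⟩ := psum_defined_pred h
    obtain ⟨T, hT, hTF⟩ := ih hF (fun k hk => hle k (Nat.lt_succ_of_lt hk))
    obtain ⟨s, hs, hss⟩ := oplus_le_oplus hTF (hle m (Nat.lt_succ_self m)) hadd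
    exact ⟨s, by rw [psum_succ' hT, hs], hss⟩

lemma psum_split {f x y : ℕ → E} {n : ℕ} {S : E} (h : psum f n = some S)
    (hsplit : ∀ k < n, oplus (x k) (y k) = some (f k)) :
    ∃ X Y, psum x n = some X ∧ psum y n = some Y ∧ oplus X Y = some S := by
  induction n generalizing S with
  | zero =>
    rw [psum_zero] at h
    exact ⟨zero, zero, rfl, rfl, by rw [oplus_zero]; exact h⟩
  | succ m ih =>
    obtain ⟨F, hF, hadd⟩ := psum_defined_pred h
    obtain ⟨X, Y, hX, hY, hXY⟩ := ih hF (fun k hk => hsplit k (Nat.lt_succ_of_lt hk))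
    obtain ⟨XX, YY, hXX, hYY, htot⟩ := interchange hXY (hsplit m (Nat.lt_succ_self m)) hadd
    exact ⟨XX, YY, by rw [psum_succ' hX, hXX], by rw [psum_succ' hY, hYY], htot⟩

lemma psum_pair {f g : ℕ → E} {n : ℕ} {S : E} (h : psum g n = some S)
    (hpair : ∀ k < n, oplus (f (2*k)) (f (2*k+1)) = some (g k)) :
    psum f (2*n) = some S := by
  induction n generalizing S with
  | zero => rw [psum_zero] at h; rw [Nat.mul_zero, psum_zero]; exact h
  | succ m ih =>
    obtain ⟨G, hG, hadd⟩ := psum_defined_pred h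
    have hf2m : psum f (2*m) = some G := ih hG (fun k hk => hpair k (Nat.lt_succ_of_lt hk))
    have hp := hpair m (Nat.lt_succ_self m)
    obtain ⟨u, hu, hGu⟩ := oplus_assoc' hp hadd
    have e1 : psum f (2*m+1) = some u := by rw [psum_succ' hf2m, hu]
    have : 2*(m+1) = (2*m+1)+1 := by ring
    rw [this, psum_succ' e1]
    exact hGu

end EffectAlgebra
end Aux3
section Aux4
namespace EffectAlgebra

variable {E : Type u} [EffectAlgebra E] [ConvexEA E]

open ConvexEA

lemma smul_zero_elem {l : ℝ} (h0 : 0 ≤ l) (h1 : l ≤ 1) : smul l (zero : E) = zero := by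
  have h := smul_oplus l (zero:E) zero zero h0 h1 (zero_oplus zero)
  exact cancel h (oplus_zero (smul l (zero:E)))

lemma zero_smul_elem (a : E) : smul (0:ℝ) a = zero := by
  have h := smul_add_coeff (0:ℝ) 0 a le_rfl le_rfl (by norm_num)
  rw [add_zero] at h
  exact (cancel h (oplus_zero (smul (0:ℝ) a))).symm ▸ rfl

lemma smul_le_smul_elem {a b : E} {l : ℝ} (h0 : 0 ≤ l) (h1 : l ≤ 1) (hab : le a b) :
    le (smul l a) (smul l b) := by
  obtain ⟨c, hc⟩ := hab
  exact ⟨smul l c, smul_oplus l a c b h0 h1 hc⟩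

lemma smul_le_smul_coeff {a : E} {l m : ℝ} (h0 : 0 ≤ l) (hlm : l ≤ m) (h1 : m ≤ 1) :
    le (smul l a) (smul m a) := by
  have h := smul_add_coeff l (m - l) a h0 (by linarith) (by linarith)
  rw [add_sub_cancel] at h
  exact ⟨smul (m-l) a, h⟩

lemma smul_le_self {a : E} {l : ℝ} (h0 : 0 ≤ l) (h1 : l ≤ 1) : le (smul l a) a := by
  have := smul_le_smul_coeff (a := a) h0 h1 le_rfl
  rwa [ConvexEA.one_smul] at this

lemma half_double (a : E) : oplus (smul (1/2 : ℝ) a) (smul (1/2 : ℝ) a) = some a := by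
  have h := smul_add_coeff (1/2 : ℝ) (1/2) a (by norm_num) (by norm_num) (by norm_num)
  norm_num at h
  rwa [ConvexEA.one_smul] at h

lemma half_unique {x s : E} (h : oplus x x = some s) : x = smul (1/2 : ℝ) s := by
  have h2 := smul_oplus (1/2 : ℝ) x x s (by norm_num) (by norm_num) h
  have h3 := half_double x
  rw [h2] at h3
  exact (Option.some.inj h3).symm

lemma le_of_half_le_half {a u : E} (h : le (smul (1/2:ℝ) a) (smul (1/2:ℝ) u)) : le a u := by
  obtain ⟨w, hw⟩ := h
  obtain ⟨ac, bd, hac, hbd, htot⟩ := interchange hw hw (half_double u)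
  have : ac = a := (Option.some.inj ((half_double a).symm.trans hac)).symm
  subst this
  exact ⟨bd, htot⟩

lemma smul_halves (l : ℝ) (a : E) (h0 : 0 ≤ l) (h1 : l ≤ 1) :
    smul (1/2 : ℝ) (smul l a) = smul (l/2) a := by
  have := smul_smul l (1/2 : ℝ) a h0 h1 (by norm_num) (by norm_num)
  rw [this]; ring_nf

end EffectAlgebra
end Aux4
section Aux5
namespace EffectAlgebra

variable {E : Type u} [EffectAlgebra E] [SEA E]
set_option linter.unusedSectionVars false

lemma commutes_symm {a b : E} (h : Commutes a b) : Commutes b a := h.symm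

lemma commutes_refl (a : E) : Commutes a a := rfl

lemma seq_zero (a : E) : SEA.seq a zero = zero := by
  have h := SEA.seq_oplus a zero zero zero (zero_oplus zero)
  exact cancel h (oplus_zero (SEA.seq a zero))

lemma zero_seq (a : E) : SEA.seq zero a = zero :=
  SEA.seq_zero_symm a zero (seq_zero a)

lemma commutes_zero (a : E) : Commutes a zero := by
  unfold Commutes; rw [seq_zero, zero_seq]

lemma seq_one (a : E) : SEA.seq a one = a := by
  have h := SEA.comm_perp a zero (commutes_zero a)
  rw [perp_zero] at h
  rw [h, SEA.one_seq]

lemma commutes_one (a : E) : Commutes a one := by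
  unfold Commutes; rw [seq_one, SEA.one_seq]

lemma seq_le_left (a b : E) : le (SEA.seq a b) a := by
  have h := SEA.seq_oplus a b (perp b) one (perp_spec b)
  rw [seq_one] at h
  exact le_of_oplus h

lemma seq_mono_right {b c : E} (a : E) (h : le b c) :
    le (SEA.seq a b) (SEA.seq a c) := by
  obtain ⟨w, hw⟩ := h
  exact le_of_oplus (SEA.seq_oplus a b w c hw)

lemma eq_zero_of_seq_one_le {x : E} (h : le x zero) : x = zero := eq_zero_of_le_zero h

/-- if `p` commutes with `x` then `x = p∘x ⊕ p⊥∘x`. -/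
lemma commutes_decomp {p x : E} (h : Commutes p x) :
    oplus (SEA.seq p x) (SEA.seq (perp p) x) = some x := by
  have hperp : SEA.seq x (perp p) = SEA.seq (perp p) x := SEA.comm_perp x p h.symm
  have hd := SEA.seq_oplus x p (perp p) one (perp_spec p)
  rw [seq_one] at hd
  rw [← h, hperp] at hd
  exact hd

lemma commutes_perp {a b : E} (h : Commutes a b) : Commutes a (perp b) :=
  SEA.comm_perp a b h

lemma commutes_perp_left {a b : E} (h : Commutes a b) : Commutes (perp a) b :=
  (SEA.comm_perp b a h.symm).symm

lemma commutes_seq {c a b : E} (h1 : Commutes c a) (h2 : Commutes c b) :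
    Commutes c (SEA.seq a b) := SEA.comm_seq a b c h1 h2

lemma commutes_oplus {c a b d : E} (h1 : Commutes c a) (h2 : Commutes c b)
    (hd : oplus a b = some d) : Commutes c d := SEA.comm_oplus a b c d h1 h2 hd

lemma sharp_one : Sharp (one : E) := by
  intro x _ h2
  rw [perp_one] at h2
  exact eq_zero_of_le_zero h2

lemma sharp_zero : Sharp (zero : E) := fun x h _ => eq_zero_of_le_zero h

lemma sharp_perp {p : E} (hp : Sharp p) : Sharp (perp p) := by
  intro x h1 h2
  rw [perp_perp] at h2
  exact hp x h2 h1

lemma sharp_seq_perp {p : E} (hp : Sharp p) : SEA.seq p (perp p) = zero := by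
  have h1 : le (SEA.seq p (perp p)) p := seq_le_left p (perp p)
  have hc : SEA.seq p (perp p) = SEA.seq (perp p) p := SEA.comm_perp p p rfl
  have h2 : le (SEA.seq p (perp p)) (perp p) := hc ▸ seq_le_left (perp p) p
  exact hp _ h1 h2

lemma sharp_perp_seq {p : E} (hp : Sharp p) : SEA.seq (perp p) p = zero := by
  rw [← SEA.comm_perp p p rfl]; exact sharp_seq_perp hp

lemma sharp_seq_self {p : E} (hp : Sharp p) : SEA.seq p p = p := by
  have hd := SEA.seq_oplus p p (perp p) one (perp_spec p)
  rw [seq_one, sharp_seq_perp hp, oplus_zero] at hd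
  exact Option.some.inj hd

/-- if `x ≤ p` with `p` sharp then `p∘x = x∘p = x`. -/
lemma seq_of_le_sharp {p x : E} (hp : Sharp p) (hx : le x p) :
    SEA.seq x p = x ∧ Commutes p x := by
  have h0 : le (SEA.seq (perp p) x) (SEA.seq (perp p) p) := seq_mono_right (perp p) hx
  rw [sharp_perp_seq hp] at h0
  have h1 : SEA.seq (perp p) x = zero := eq_zero_of_le_zero h0
  have h2 : SEA.seq x (perp p) = zero := SEA.seq_zero_symm (perp p) x h1
  have hcp : Commutes x (perp p) := by unfold Commutes; rw [h1, h2]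
  have hc : Commutes x p := by
    have := SEA.comm_perp x (perp p) hcp
    rwa [perp_perp] at this
  have hd := SEA.seq_oplus x p (perp p) one (perp_spec p)
  rw [seq_one, h2, oplus_zero] at hd
  exact ⟨Option.some.inj hd, hc.symm⟩

lemma seq_eq_of_le_sharp {p x : E} (hp : Sharp p) (hx : le x p) : SEA.seq p x = x := by
  obtain ⟨h1, h2⟩ := seq_of_le_sharp hp hx
  rw [h2]; exact h1

/-- orthogonal corners multiply to zero -/
lemma seq_orth_of_le {p x y : E} (hp : Sharp p) (hx : le x p) (hy : le y (perp p)) :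
    SEA.seq x y = zero ∧ SEA.seq y x = zero := by
  have h0 : le (SEA.seq p y) (SEA.seq p (perp p)) := seq_mono_right p hy
  rw [sharp_seq_perp hp] at h0
  have h1 : SEA.seq p y = zero := eq_zero_of_le_zero h0
  have h2 : SEA.seq y p = zero := SEA.seq_zero_symm p y h1
  have h3 : le (SEA.seq y x) (SEA.seq y p) := seq_mono_right y hx
  rw [h2] at h3
  have h4 : SEA.seq y x = zero := eq_zero_of_le_zero h3
  exact ⟨SEA.seq_zero_symm y x h4, h4⟩

/-- `a ∈ sC p` for sharp `p` implies `p | a`. -/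
lemma commutes_of_mem_sC {p a : E} (hp : Sharp p) (ha : a ∈ sC p) : Commutes p a := by
  have hd : oplus (SEA.seq p a) (SEA.seq (perp p) a) = some a := ha
  have hx : le (SEA.seq p a) p := seq_le_left p a
  have hy : le (SEA.seq (perp p) a) (perp p) := seq_le_left (perp p) a
  have c1 : Commutes p (SEA.seq p a) := (seq_of_le_sharp hp hx).2
  have c2 : Commutes p (SEA.seq (perp p) a) := by
    have horth := seq_orth_of_le hp (le_refl p) hy
    unfold Commutes; rw [horth.1, horth.2]
  exact commutes_oplus c1 c2 hd

/-- `p | a` for sharp `p` implies `a ∈ sC p`. -/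
lemma mem_sC_of_commutes {p a : E} (h : Commutes p a) : a ∈ sC p :=
  commutes_decomp h

end EffectAlgebra
end Aux5
section Aux6
namespace EffectAlgebra

variable {E : Type u} [EffectAlgebra E] [SEA E]
set_option linter.unusedSectionVars false

lemma seq_absorb {p q : E} (hp : Sharp p) (hpq : Commutes p q) :
    SEA.seq p (SEA.seq p q) = SEA.seq p q := by
  rw [SEA.comm_assoc p p q rfl, sharp_seq_self hp]

lemma seq_idem {p q : E} (hp : Sharp p) (hq : Sharp q) (hpq : Commutes p q) :
    SEA.seq (SEA.seq p q) (SEA.seq p q) = SEA.seq p q := by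
  have h1 : SEA.seq q (SEA.seq p q) = SEA.seq p q := by
    have := SEA.comm_assoc q p q hpq.symm
    rw [this, hpq.symm]
    have := SEA.comm_assoc p q q hpq
    rw [← this, sharp_seq_self hq]
  have := SEA.comm_assoc p q (SEA.seq p q) hpq
  rw [← this, h1, seq_absorb hp hpq]

lemma seq_perp_zero_of_idem {r : E} (h : SEA.seq r r = r) : SEA.seq r (perp r) = zero := by
  have hd := SEA.seq_oplus r r (perp r) one (perp_spec r)
  rw [seq_one, h] at hd
  exact (cancel hd (oplus_zero r)).symm ▸ rfl

lemma sharp_seq {p q : E} (hp : Sharp p) (hq : Sharp q) (hpq : Commutes p q) :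
    Sharp (SEA.seq p q) := by
  set r := SEA.seq p q with hr
  have hidem : SEA.seq r r = r := seq_idem hp hq hpq
  have hrp : le r p := seq_le_left p q
  have hrq : le r q := by rw [hr, hpq]; exact seq_le_left q p
  intro x hxr hxrp
  have hxp : le x p := le_trans hxr hrp
  have hxq : le x q := le_trans hxr hrq
  have hpx : SEA.seq p x = x := seq_eq_of_le_sharp hp hxp
  have hqx : SEA.seq q x = x := seq_eq_of_le_sharp hq hxq
  -- x = p∘x ≤ p∘(perp r)
  have h1 : le x (SEA.seq p (perp r)) := by
    have := seq_mono_right p hxrp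
    rwa [hpx] at this
  -- q ∘ (p ∘ perp r) = 0
  have hq_pr : SEA.seq q (SEA.seq p (perp r)) = zero := by
    have hqp : Commutes q p := hpq.symm
    rw [SEA.comm_assoc q p (perp r) hqp, hqp]
    exact seq_perp_zero_of_idem hidem
  have h2 : le x (SEA.seq q (SEA.seq p (perp r))) := by
    have := seq_mono_right q h1
    rwa [hqx] at this
  rw [hq_pr] at h2
  exact eq_zero_of_le_zero h2

end EffectAlgebra
end Aux6

section Aux6b
namespace EffectAlgebra

variable {E : Type u} [EffectAlgebra E] [SEA E] [ConvexEA E]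
set_option linter.unusedSectionVars false

open ConvexEA

/-- dyadic rationals in [0,1] -/
def Dyad (l : ℝ) : Prop := ∃ k n : ℕ, k ≤ 2^n ∧ l = (k : ℝ) / 2^n

lemma Dyad.nonneg {l : ℝ} (h : Dyad l) : 0 ≤ l := by
  obtain ⟨k, n, _, rfl⟩ := h; positivity

lemma Dyad.le_one {l : ℝ} (h : Dyad l) : l ≤ 1 := by
  obtain ⟨k, n, hk, rfl⟩ := h
  rw [div_le_one (by positivity)]
  exact_mod_cast hk

lemma seq_smul_half (c x : E) :
    SEA.seq c (smul (1/2 : ℝ) x) = smul (1/2 : ℝ) (SEA.seq c x) := by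
  have h := SEA.seq_oplus c (smul (1/2:ℝ) x) (smul (1/2:ℝ) x) x (half_double x)
  exact half_unique h

lemma seq_smul_invpow (c x : E) (n : ℕ) :
    SEA.seq c (smul ((1/2 : ℝ)^n) x) = smul ((1/2:ℝ)^n) (SEA.seq c x) := by
  induction n with
  | zero => simp [ConvexEA.one_smul]
  | succ m ih =>
    have hsm : smul ((1/2:ℝ)^(m+1)) x = smul (1/2:ℝ) (smul ((1/2:ℝ)^m) x) := by
      rw [smul_smul ((1/2:ℝ)^m) (1/2:ℝ) x (by positivity) (by
        apply pow_le_one₀ <;> norm_num) (by norm_num) (by norm_num)]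
      ring_nf
    rw [hsm, seq_smul_half, ih]
    rw [smul_smul ((1/2:ℝ)^m) (1/2:ℝ) (SEA.seq c x) (by positivity) (by
        apply pow_le_one₀ <;> norm_num) (by norm_num) (by norm_num)]
    ring_nf

lemma seq_smul_dyad {l : ℝ} (hl : Dyad l) (c x : E) :
    SEA.seq c (smul l x) = smul l (SEA.seq c x) := by
  obtain ⟨k, n, hk, rfl⟩ := hl
  induction k with
  | zero =>
    simp only [Nat.cast_zero, zero_div]
    rw [zero_smul_elem, zero_smul_elem, seq_zero]
  | succ j ih =>
    have hj : j ≤ 2^n := Nat.le_of_succ_le hk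
    have hcast : ((j+1 : ℕ) : ℝ)/2^n = (j:ℝ)/2^n + (1:ℝ)/2^n := by push_cast; ring
    have hpow : (1:ℝ)/2^n = (1/2:ℝ)^n := by rw [div_pow, one_pow]
    have hadd : ∀ y : E, oplus (smul ((j:ℝ)/2^n) y) (smul ((1:ℝ)/2^n) y)
        = some (smul (((j+1:ℕ):ℝ)/2^n) y) := by
      intro y
      rw [hcast]
      apply smul_add_coeff
      · positivity
      · positivity
      · rw [← hcast, div_le_one (by positivity)]; exact_mod_cast hk
    have h1 := SEA.seq_oplus c (smul ((j:ℝ)/2^n) x) (smul ((1:ℝ)/2^n) x)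
      (smul (((j+1:ℕ):ℝ)/2^n) x) (hadd x)
    rw [ih hj, hpow, seq_smul_invpow, ← hpow] at h1
    rw [hadd (SEA.seq c x)] at h1
    exact (Option.some.inj h1).symm

/-- key lemma: for sharp commuting `p, q` and dyadic `l`, `(l p) ∘ q = l (p ∘ q)`
    and `l p` commutes with `p ∘ q`. -/
lemma smul_seq_sharp {p q : E} {l : ℝ} (hp : Sharp p) (hq : Sharp q)
    (hpq : Commutes p q) (hl : Dyad l) :
    SEA.seq (smul l p) q = smul l (SEA.seq p q) ∧
      Commutes (SEA.seq p q) (smul l p) := by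
  set r := SEA.seq p q with hr
  have hrsharp : Sharp r := sharp_seq hp hq hpq
  have hrlep : le r p := seq_le_left p q
  have hpr : Commutes p r := commutes_seq (commutes_refl p) hpq
  have hrp_eq : SEA.seq r p = r := (seq_of_le_sharp hp hrlep).1
  have hpr_eq : SEA.seq p r = r := seq_eq_of_le_sharp hp hrlep
  -- p ∘ perp r =: w  with  r ⊕ w = p
  have hw : oplus r (SEA.seq p (perp r)) = some p := by
    have h := SEA.seq_oplus p r (perp r) one (perp_spec r)
    rw [seq_one, hpr_eq] at h
    exact h
  have hwcomm : SEA.seq (perp r) p = SEA.seq p (perp r) := (commutes_perp hpr).symm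
  -- r | (l p)
  have hmem : smul l p ∈ sC r := by
    show oplus (SEA.seq r (smul l p)) (SEA.seq (perp r) (smul l p)) = some (smul l p)
    rw [seq_smul_dyad hl r p, seq_smul_dyad hl (perp r) p, hrp_eq, hwcomm]
    exact smul_oplus l r (SEA.seq p (perp r)) p hl.nonneg hl.le_one hw
  have hcomm_r_lp : Commutes r (smul l p) := commutes_of_mem_sC hrsharp hmem
  constructor
  · -- (l p) ∘ q = (l p) ∘ r ⊕ (l p) ∘ (p⊥ ∘ q) = l r
    have hdecq : oplus (SEA.seq p q) (SEA.seq (perp p) q) = some q :=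
      commutes_decomp hpq
    have h1 := SEA.seq_oplus (smul l p) (SEA.seq p q) (SEA.seq (perp p) q) q hdecq
    have horth : SEA.seq (smul l p) (SEA.seq (perp p) q) = zero :=
      (seq_orth_of_le hp (smul_le_self hl.nonneg hl.le_one) (seq_le_left (perp p) q)).1
    rw [horth, oplus_zero] at h1
    have h2 : SEA.seq (smul l p) r = smul l r := by
      rw [← hcomm_r_lp, seq_smul_dyad hl r p, hrp_eq]
    rw [← hr, h2] at h1
    exact (Option.some.inj h1).symm
  · exact hcomm_r_lp

/-- crux: dyadic multiples of commuting sharp elements commute. -/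
lemma commutes_smul_smul {p q : E} {l m : ℝ} (hp : Sharp p) (hq : Sharp q)
    (hpq : Commutes p q) (hl : Dyad l) (hm : Dyad m) :
    Commutes (smul l p) (smul m q) := by
  have h1 : SEA.seq (smul l p) (smul m q) = smul m (smul l (SEA.seq p q)) := by
    rw [seq_smul_dyad hm (smul l p) q, (smul_seq_sharp hp hq hpq hl).1]
  have h2 : SEA.seq (smul m q) (smul l p) = smul l (smul m (SEA.seq q p)) := by
    rw [seq_smul_dyad hl (smul m q) p, (smul_seq_sharp hq hp hpq.symm hm).1]
  unfold Commutes
  rw [h1, h2, hpq.symm]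
  rw [smul_smul l m (SEA.seq p q) hl.nonneg hl.le_one hm.nonneg hm.le_one,
    smul_smul m l (SEA.seq p q) hm.nonneg hm.le_one hl.nonneg hl.le_one, mul_comm]

lemma mcompat_of_commutes {p q : E} (hp : Sharp p) (h : Commutes p q) : MCompat p q := by
  have hpq' : Commutes p (perp q) := commutes_perp h
  set a₁ := SEA.seq p (perp q) with ha₁
  set b₁ := SEA.seq (perp p) q with hb₁
  set c := SEA.seq p q with hc
  have h3 : oplus a₁ c = some p := by
    have hh := SEA.seq_oplus p (perp q) q one ((oplus_comm q (perp q)) ▸ perp_spec q)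
    rw [seq_one] at hh
    exact hh
  have h4 : oplus b₁ c = some q := (oplus_comm c b₁) ▸ commutes_decomp h
  have ha₁q : le a₁ (perp q) := by
    rw [ha₁, hpq']
    exact seq_le_left (perp q) p
  obtain ⟨t, ht⟩ := oplus_defined_of_le_perp ha₁q
  obtain ⟨s, hs, hst⟩ := oplus_assoc' h4 ht
  exact ⟨a₁, b₁, c, s, t, hs, hst, h3, h4⟩

lemma commutes_of_mcompat {p q : E} (hp : Sharp p) (h : MCompat p q) : Commutes p q := by
  obtain ⟨a₁, b₁, c, s, t, h1, h2, h3, h4⟩ := h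
  have hcp : le c p := le_of_oplus_right h3
  have hpc : Commutes p c := (seq_of_le_sharp hp hcp).2
  obtain ⟨v, hv, hbv⟩ := oplus_assoc ((oplus_comm a₁ b₁) ▸ h1) h2
  have hvp : v = p := Option.some.inj (hv ▸ h3)
  rw [hvp] at hbv
  have hb₁ : le b₁ (perp p) := le_perp_of_oplus' hbv
  have h5 : le (SEA.seq p b₁) (SEA.seq p (perp p)) := seq_mono_right p hb₁
  rw [sharp_seq_perp hp] at h5
  have h6 : SEA.seq p b₁ = zero := eq_zero_of_le_zero h5
  have h7 : SEA.seq b₁ p = zero := SEA.seq_zero_symm p b₁ h6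
  have hpb : Commutes p b₁ := by unfold Commutes; rw [h6, h7]
  exact commutes_oplus hpb hpc h4

end EffectAlgebra
end Aux6b
section Aux7
namespace EffectAlgebra

/-- words over a set of generators, closed under `perp` and `seq` -/
inductive IsWord {E : Type u} [EffectAlgebra E] [SEA E] (S : Set E) : E → Prop
  | base {x : E} : x ∈ S → IsWord S x
  | perp {x : E} : IsWord S x → IsWord S (perp x)
  | sq {x y : E} : IsWord S x → IsWord S y → IsWord S (SEA.seq x y)

variable {E : Type u} [EffectAlgebra E] [SEA E]
set_option linter.unusedSectionVars false

lemma word_commutes {S : Set E} {c : E} (hc : ∀ s ∈ S, Commutes c s) :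
    ∀ {w : E}, IsWord S w → Commutes c w := by
  intro w hw
  induction hw with
  | base h => exact hc _ h
  | perp _ ih => exact commutes_perp ih
  | sq _ _ ih1 ih2 => exact commutes_seq ih1 ih2

lemma word_cross {S T : Set E} (hST : ∀ s ∈ S, ∀ t ∈ T, Commutes s t)
    {w w' : E} (hw : IsWord S w) (hw' : IsWord T w') : Commutes w w' := by
  have h1 : ∀ s ∈ S, Commutes s w' := fun s hs => word_commutes (hST s hs) hw'
  have h2 : ∀ s ∈ S, Commutes w' s := fun s hs => (h1 s hs).symm
  exact (word_commutes h2 hw).symm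

lemma word_sharp {S : Set E} (hsh : ∀ s ∈ S, Sharp s)
    (hcm : ∀ s ∈ S, ∀ t ∈ S, Commutes s t) {w : E} (hw : IsWord S w) : Sharp w := by
  induction hw with
  | base h => exact hsh _ h
  | perp _ ih => exact sharp_perp ih
  | sq h1 h2 ih1 ih2 => exact sharp_seq ih1 ih2 (word_cross hcm h1 h2)

lemma word_commutes_of {S : Set E} {a : E} (ha : ∀ s ∈ S, Commutes s a)
    {w : E} (hw : IsWord S w) : Commutes w a := by
  have := word_commutes (c := a) (fun s hs => (ha s hs).symm) hw
  exact this.symm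

-- sPbicomm facts
lemma sPbicomm_sharp {a p : E} (hp : p ∈ sPbicomm a) : Sharp p := hp.1

lemma sPbicomm_commutes {a p : E} (hp : p ∈ sPbicomm a) : Commutes p a :=
  commutes_of_mem_sC hp.1 hp.2.1

lemma sPbicomm_pairwise {a p q : E} (hp : p ∈ sPbicomm a) (hq : q ∈ sPbicomm a) :
    Commutes p q := by
  have hqPC : q ∈ sPC a := ⟨hq.1, hq.2.1⟩
  exact commutes_of_mem_sC hp.1 (hp.2.2 q hqPC)

lemma one_mem_sPbicomm (a : E) : (one : E) ∈ sPbicomm a := by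
  refine ⟨sharp_one, ?_, ?_⟩
  · show oplus (SEA.seq one a) (SEA.seq (perp one) a) = some a
    rw [SEA.one_seq, perp_one, zero_seq, oplus_zero]
  · intro q _
    show oplus (SEA.seq one q) (SEA.seq (perp one) q) = some q
    rw [SEA.one_seq, perp_one, zero_seq, oplus_zero]

/-- words over `sPbicomm a` : sharp, pairwise commuting, commuting with `a`. -/
lemma wordA_sharp {a w : E} (hw : IsWord (sPbicomm a) w) : Sharp w :=
  word_sharp (fun _ hs => sPbicomm_sharp hs) (fun _ hs _ ht => sPbicomm_pairwise hs ht) hw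

lemma wordA_pairwise {a w w' : E} (hw : IsWord (sPbicomm a) w)
    (hw' : IsWord (sPbicomm a) w') : Commutes w w' :=
  word_cross (fun _ hs _ ht => sPbicomm_pairwise hs ht) hw hw'

lemma wordA_commutes {a w : E} (hw : IsWord (sPbicomm a) w) : Commutes w a :=
  word_commutes_of (fun _ hs => sPbicomm_commutes hs) hw

lemma psum_commutes {c : E} {f : ℕ → E} {n : ℕ} {S : E}
    (hc : ∀ k < n, Commutes c (f k)) (h : psum f n = some S) : Commutes c S := by
  induction n generalizing S with
  | zero => rw [psum_zero] at h; exact (Option.some.inj h) ▸ commutes_zero c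
  | succ m ih =>
    obtain ⟨T, hT, hadd⟩ := psum_defined_pred h
    exact commutes_oplus (ih (fun k hk => hc k (Nat.lt_succ_of_lt hk)) hT)
      (hc m (Nat.lt_succ_self m)) hadd

/-- first-argument additivity under commutation assumptions -/
lemma seq_oplus_left {c₁ c₂ s a : E} (h : oplus c₂ c₁ = some s) (hc₁ : Sharp c₁)
    (hcc : Commutes c₁ c₂) (h1 : Commutes c₁ a) (h2 : Commutes c₂ a) :
    oplus (SEA.seq c₂ a) (SEA.seq c₁ a) = some (SEA.seq s a) := by
  have hsa : Commutes s a := (commutes_oplus h2.symm h1.symm h).symm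
  have hc₁s : Commutes c₁ s := commutes_oplus hcc (commutes_refl c₁) h
  have hc₂le : le c₂ (perp c₁) := le_perp_of_oplus' h
  -- c₁ ∘ s = c₁ and (perp c₁) ∘ s = c₂
  have e0 := SEA.seq_oplus c₁ c₂ c₁ s h
  have ec₂ : SEA.seq c₁ c₂ = zero := by
    have := seq_mono_right c₁ hc₂le
    rw [sharp_seq_perp hc₁] at this
    exact eq_zero_of_le_zero this
  rw [ec₂, sharp_seq_self hc₁, zero_oplus] at e0
  have e0' : SEA.seq c₁ s = c₁ := (Option.some.inj e0).symm
  have e1 := SEA.seq_oplus (perp c₁) c₂ c₁ s h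
  rw [sharp_perp_seq hc₁, seq_eq_of_le_sharp (sharp_perp hc₁) hc₂le, oplus_zero] at e1
  have e1' : SEA.seq (perp c₁) s = c₂ := (Option.some.inj e1).symm
  -- decompose s∘a by c₁
  have hc₁sa : Commutes c₁ (SEA.seq s a) := commutes_seq hc₁s h1
  have hdec := commutes_decomp hc₁sa
  rw [SEA.comm_assoc c₁ s a hc₁s, e0'] at hdec
  have hps : Commutes (perp c₁) s := hc₁s.symm |> commutes_perp |>.symm
  rw [SEA.comm_assoc (perp c₁) s a hps, e1'] at hdec
  exact (oplus_comm (SEA.seq c₂ a) (SEA.seq c₁ a)) ▸ hdec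

/-- decomposition `S∘a = ⊕ (f k ∘ a)` for pairwise commuting sharp summands commuting with a -/
lemma psum_seq_left {f : ℕ → E} {n : ℕ} {S a : E} (h : psum f n = some S)
    (hsh : ∀ k < n, Sharp (f k)) (hcm : ∀ i < n, ∀ j < n, Commutes (f i) (f j))
    (ha : ∀ k < n, Commutes (f k) a) :
    psum (fun k => SEA.seq (f k) a) n = some (SEA.seq S a) := by
  induction n generalizing S with
  | zero =>
    rw [psum_zero] at h
    rw [psum_zero, ← Option.some.inj h, zero_seq]
  | succ m ih =>
    obtain ⟨T, hT, hadd⟩ := psum_defined_pred h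
    have hTa : Commutes T a := (psum_commutes (fun k hk => (ha k (Nat.lt_succ_of_lt hk)).symm) hT).symm
    have hfT : Commutes (f m) T :=
      psum_commutes (fun k hk => hcm m (Nat.lt_succ_self m) k (Nat.lt_succ_of_lt hk)) hT
    have key := seq_oplus_left hadd (hsh m (Nat.lt_succ_self m)) hfT
      (ha m (Nat.lt_succ_self m)) hTa
    have hg := ih hT (fun k hk => hsh k (Nat.lt_succ_of_lt hk))
      (fun i hi j hj => hcm i (Nat.lt_succ_of_lt hi) j (Nat.lt_succ_of_lt hj))
      (fun k hk => ha k (Nat.lt_succ_of_lt hk))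
    rw [psum_succ' hg]
    exact key

end EffectAlgebra
end Aux7
section Aux8
namespace EffectAlgebra

variable {E : Type u} [EffectAlgebra E] [SEA E] [ConvexEA E]
set_option linter.unusedSectionVars false

open ConvexEA

lemma mcompat_symm {p q : E} (h : MCompat p q) : MCompat q p := by
  obtain ⟨a₁, b₁, c, s, t, h1, h2, h3, h4⟩ := h
  exact ⟨b₁, a₁, c, s, t, (oplus_comm a₁ b₁) ▸ h1, h2, h4, h3⟩

lemma psum_seq_right {f : ℕ → E} {n : ℕ} {S : E} (c : E) (h : psum f n = some S) :
    psum (fun k => SEA.seq c (f k)) n = some (SEA.seq c S) := by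
  induction n generalizing S with
  | zero =>
    rw [psum_zero] at h
    rw [psum_zero, ← Option.some.inj h, seq_zero]
  | succ m ih =>
    obtain ⟨T, hT, hadd⟩ := psum_defined_pred h
    rw [psum_succ' (ih hT)]
    exact SEA.seq_oplus c T (f m) S hadd

lemma psum_smul {f : ℕ → E} {n : ℕ} {S : E} {l : ℝ} (h0 : 0 ≤ l) (h1 : l ≤ 1)
    (h : psum f n = some S) :
    psum (fun k => smul l (f k)) n = some (smul l S) := by
  induction n generalizing S with
  | zero =>
    rw [psum_zero] at h
    rw [psum_zero, ← Option.some.inj h, smul_zero_elem h0 h1]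
  | succ m ih =>
    obtain ⟨T, hT, hadd⟩ := psum_defined_pred h
    rw [psum_succ' (ih hT)]
    exact smul_oplus l T (f m) S h0 h1 hadd

lemma psum_all_zero {g : ℕ → E} {n : ℕ} {T : E} (h : psum g n = some T)
    (hz : ∀ j < n, g j = zero) : T = zero := by
  induction n generalizing T with
  | zero => rw [psum_zero] at h; exact (Option.some.inj h).symm
  | succ i ih =>
    obtain ⟨T2, hT2, hadd2⟩ := psum_defined_pred h
    have hT2z : T2 = zero := ih hT2 (fun j hj => hz j (Nat.lt_succ_of_lt hj))
    rw [hT2z, hz i (Nat.lt_succ_self i), oplus_zero] at hadd2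
    exact (Option.some.inj hadd2).symm

lemma psum_single {g : ℕ → E} {n : ℕ} {G : E} (h : psum g n = some G) {k : ℕ} (hk : k < n)
    (hz : ∀ j < n, j ≠ k → g j = zero) : G = g k := by
  induction n generalizing G with
  | zero => omega
  | succ m ih =>
    obtain ⟨T, hT, hadd⟩ := psum_defined_pred h
    rcases Nat.lt_or_ge k m with hlt | hge
    · have hT' : T = g k := ih hT hlt (fun j hj hjk => hz j (Nat.lt_succ_of_lt hj) hjk)
      have : g m = zero := hz m (Nat.lt_succ_self m) (by omega)
      rw [this, oplus_zero] at hadd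
      rw [← Option.some.inj hadd, hT']
    · have hkm : k = m := by omega
      subst hkm
      have hTz : T = zero :=
        psum_all_zero hT (fun j hj => hz j (Nat.lt_succ_of_lt hj) (by omega))
      rw [hTz, zero_oplus] at hadd
      exact (Option.some.inj hadd).symm

end EffectAlgebra
end Aux8
section Aux9
namespace EffectAlgebra

variable {E : Type u} [EffectAlgebra E] [SEA E] [ConvexEA E]
set_option linter.unusedSectionVars false
set_option maxHeartbeats 1000000

open ConvexEA

lemma dyad_div {k n : ℕ} (h : k ≤ 2^n) : Dyad ((k:ℝ)/2^n) := ⟨k, n, h, rfl⟩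

lemma dyad_one : Dyad (1 : ℝ) := ⟨1, 0, by norm_num, by norm_num⟩

lemma commutes_smul_right {p q : E} {m : ℝ} (hp : Sharp p) (hq : Sharp q)
    (h : Commutes p q) (hm : Dyad m) : Commutes p (smul m q) := by
  have := commutes_smul_smul hp hq h dyad_one hm
  rwa [ConvexEA.one_smul] at this

/-- the level-`n` invariant for the spectral approximation of `a` -/
def Inv (a : E) (n : ℕ) (d : ℕ → E) : Prop :=
  (∀ k : ℕ, k < 2^n → IsWord (sPbicomm a) (d k)) ∧
  psum d (2^n) = some one ∧
  (∀ k : ℕ, k < 2^n → le (smul ((k:ℝ)/(2:ℝ)^n) (d k)) (SEA.seq (d k) a)) ∧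
  (∀ k : ℕ, k < 2^n → le (SEA.seq (d k) a) (smul (((k:ℝ)+1)/(2:ℝ)^n) (d k)))

lemma base_inv (a : E) : Inv a 0 (fun _ => one) := by
  refine ⟨?_, ?_, ?_, ?_⟩
  · intro k _; exact IsWord.base (one_mem_sPbicomm a)
  · show psum (fun _ => (one:E)) (0+1) = some one
    rw [psum_succ' (psum_zero _)]
    exact zero_oplus one
  · intro k hk
    have hk0 : k = 0 := by omega
    subst hk0
    norm_num
    rw [zero_smul_elem]
    exact le_zero_left _
  · intro k hk
    have hk0 : k = 0 := by omega
    subst hk0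
    norm_num
    rw [SEA.one_seq, ConvexEA.one_smul]
    exact le_one a

lemma refine_step
    (hcomp : ∀ e f : E, sCommuteC e f → ∃ p : E, p ∈ sPbicomm e ∧ p ∈ sPbicomm f ∧
      le (SEA.seq p e) (SEA.seq p f) ∧ le (SEA.seq (perp p) f) (SEA.seq (perp p) e))
    {a : E} {n : ℕ} {d : ℕ → E} (h : Inv a n d) :
    ∃ d' : ℕ → E, Inv a (n+1) d' ∧
      ∀ s s', psum (fun k => smul ((k:ℝ)/2^n) (d k)) (2^n) = some s →
        psum (fun j => smul ((j:ℝ)/2^(n+1)) (d' j)) (2^(n+1)) = some s' → le s s' := by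
  obtain ⟨hword, htot, hlow, hup⟩ := h
  have hsharp : ∀ k < 2^n, Sharp (d k) := fun k hk => wordA_sharp (hword k hk)
  have hpow : (2:ℕ)^(n+1) = 2*2^n := by rw [pow_succ, Nat.mul_comm]
  have hmid : ∀ k < 2^n, Dyad (((2*k+1:ℕ):ℝ)/2^(n+1)) := by
    intro k hk
    refine dyad_div (n := n+1) (k := 2*k+1) (by omega)
  -- the midpoint element Y
  have hYex : ∃ Y, psum (fun k => smul (((2*k+1:ℕ):ℝ)/2^(n+1)) (d k)) (2^n) = some Y := by
    obtain ⟨Y, hY, _⟩ := psum_le_psum htot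
      (fun k hk => smul_le_self (hmid k hk).nonneg (hmid k hk).le_one)
    exact ⟨Y, hY⟩
  obtain ⟨Y, hY⟩ := hYex
  -- a C Y
  have hCaY : sCommuteC a Y := by
    intro p hp q hq
    have hpY : Commutes p Y := by
      refine psum_commutes (fun j hj => ?_) hY
      exact commutes_smul_right (sPbicomm_sharp hp) (wordA_sharp (hword j hj))
        (word_cross (fun s hs t ht => sPbicomm_pairwise hs ht) (IsWord.base hp) (hword j hj))
        (hmid j hj)
    have hpPC : p ∈ sPC Y := ⟨sPbicomm_sharp hp, mem_sC_of_commutes hpY⟩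
    have hqp : Commutes q p := commutes_of_mem_sC (sPbicomm_sharp hq) (hq.2.2 p hpPC)
    exact mcompat_of_commutes (sPbicomm_sharp hp) hqp.symm
  obtain ⟨v, hva, hvY, hb1, hb2⟩ := hcomp a Y hCaY
  set d' : ℕ → E := fun j => if j % 2 = 0 then SEA.seq (d (j/2)) v else SEA.seq (d (j/2)) (perp v)
    with hd'def
  have hd'e : ∀ k : ℕ, d' (2*k) = SEA.seq (d k) v := by
    intro k
    rw [hd'def]
    simp only
    rw [if_pos (by omega)]
    have h22 : 2*k/2 = k := by omega
    rw [h22]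
  have hd'o : ∀ k : ℕ, d' (2*k+1) = SEA.seq (d k) (perp v) := by
    intro k
    rw [hd'def]
    simp only
    rw [if_neg (by omega)]
    have h22 : (2*k+1)/2 = k := by omega
    rw [h22]
  -- common computation : corner pieces against Y
  have hYpiece : ∀ k : ℕ, k < 2^n → ∀ w : E,
      SEA.seq (SEA.seq (d k) w) Y = smul (((2*k+1:ℕ):ℝ)/2^(n+1)) (SEA.seq (d k) w) := by
    intro k hk w
    have hcd : le (SEA.seq (d k) w) (d k) := seq_le_left _ _
    have h2 : ∀ j : ℕ, j < 2^n →
        (fun j => if j = k then smul (((2*k+1:ℕ):ℝ)/2^(n+1)) (SEA.seq (d k) w) else zero) j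
        = SEA.seq (SEA.seq (d k) w) (smul (((2*j+1:ℕ):ℝ)/2^(n+1)) (d j)) := by
      intro j hj
      beta_reduce
      by_cases hjk : j = k
      · subst hjk
        rw [if_pos rfl, seq_smul_dyad (hmid j hj), (seq_of_le_sharp (hsharp j hj) hcd).1]
      · simp only [if_neg hjk]
        rw [seq_smul_dyad (hmid j hj),
          (seq_orth_of_le (hsharp k hk) hcd (psum_orth htot hj hk hjk)).1,
          smul_zero_elem (hmid j hj).nonneg (hmid j hj).le_one]
    have h1 : psum (fun j => if j = k then
        smul (((2*k+1:ℕ):ℝ)/2^(n+1)) (SEA.seq (d k) w) else zero) (2^n)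
        = some (SEA.seq (SEA.seq (d k) w) Y) := by
      rw [psum_congr h2]
      exact psum_seq_right (SEA.seq (d k) w) hY
    have h3 := psum_single h1 hk (fun j hj hjk => by rw [if_neg hjk])
    rw [if_pos rfl] at h3
    exact h3
  -- bounds for the even pieces
  have hcu : ∀ k : ℕ, k < 2^n → le (SEA.seq (SEA.seq (d k) v) a)
      (smul (((2*k+1:ℕ):ℝ)/2^(n+1)) (SEA.seq (d k) v)) := by
    intro k hk
    have hcDv : Commutes (d k) v := wordA_pairwise (hword k hk) (IsWord.base hva)
    have e1 : SEA.seq (SEA.seq (d k) v) a = SEA.seq (d k) (SEA.seq v a) :=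
      (SEA.comm_assoc (d k) v a hcDv).symm
    have e2 : le (SEA.seq (d k) (SEA.seq v a)) (SEA.seq (d k) (SEA.seq v Y)) :=
      seq_mono_right (d k) hb1
    have e3 : SEA.seq (d k) (SEA.seq v Y) = SEA.seq (SEA.seq (d k) v) Y :=
      SEA.comm_assoc (d k) v Y hcDv
    rw [e1, ← hYpiece k hk v, ← e3]
    exact e2
  have hcl : ∀ k : ℕ, k < 2^n → le (smul ((k:ℝ)/(2:ℝ)^n) (SEA.seq (d k) v))
      (SEA.seq (SEA.seq (d k) v) a) := by
    intro k hk
    have hcDv : Commutes (d k) v := wordA_pairwise (hword k hk) (IsWord.base hva)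
    have e1 : SEA.seq (SEA.seq (d k) v) a = SEA.seq v (SEA.seq (d k) a) := by
      rw [hcDv]
      exact (SEA.comm_assoc v (d k) a hcDv.symm).symm
    have e2 : le (SEA.seq v (smul ((k:ℝ)/(2:ℝ)^n) (d k))) (SEA.seq v (SEA.seq (d k) a)) :=
      seq_mono_right v (hlow k hk)
    rw [seq_smul_dyad (dyad_div (le_of_lt hk)), ← hcDv] at e2
    rw [e1]
    exact e2
  -- bounds for the odd pieces
  have hc'l : ∀ k : ℕ, k < 2^n → le (smul (((2*k+1:ℕ):ℝ)/2^(n+1)) (SEA.seq (d k) (perp v)))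
      (SEA.seq (SEA.seq (d k) (perp v)) a) := by
    intro k hk
    have hcDv' : Commutes (d k) (perp v) :=
      commutes_perp (wordA_pairwise (hword k hk) (IsWord.base hva))
    have e1 : SEA.seq (SEA.seq (d k) (perp v)) Y = SEA.seq (d k) (SEA.seq (perp v) Y) :=
      (SEA.comm_assoc (d k) (perp v) Y hcDv').symm
    have e2 : le (SEA.seq (d k) (SEA.seq (perp v) Y)) (SEA.seq (d k) (SEA.seq (perp v) a)) :=
      seq_mono_right (d k) hb2
    have e3 : SEA.seq (d k) (SEA.seq (perp v) a) = SEA.seq (SEA.seq (d k) (perp v)) a :=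
      SEA.comm_assoc (d k) (perp v) a hcDv'
    rw [← hYpiece k hk (perp v), e1, ← e3]
    exact e2
  have hc'u : ∀ k : ℕ, k < 2^n → le (SEA.seq (SEA.seq (d k) (perp v)) a)
      (smul (((k:ℝ)+1)/(2:ℝ)^n) (SEA.seq (d k) (perp v))) := by
    intro k hk
    have hcDv' : Commutes (d k) (perp v) :=
      commutes_perp (wordA_pairwise (hword k hk) (IsWord.base hva))
    have e1 : SEA.seq (SEA.seq (d k) (perp v)) a = SEA.seq (perp v) (SEA.seq (d k) a) := by
      rw [hcDv']
      exact (SEA.comm_assoc (perp v) (d k) a hcDv'.symm).symm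
    have e2 : le (SEA.seq (perp v) (SEA.seq (d k) a))
        (SEA.seq (perp v) (smul (((k:ℝ)+1)/(2:ℝ)^n) (d k))) :=
      seq_mono_right (perp v) (hup k hk)
    have hcast : ((k:ℝ)+1)/(2:ℝ)^n = ((k+1:ℕ):ℝ)/(2:ℝ)^n := by push_cast; ring
    rw [hcast, seq_smul_dyad (dyad_div hk), ← hcDv'] at e2
    rw [e1, hcast]
    exact e2
  -- the pairing identity
  have hpair2 : ∀ k : ℕ, k < 2^n →
      oplus (SEA.seq (d k) v) (SEA.seq (d k) (perp v)) = some (d k) := by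
    intro k hk
    have := SEA.seq_oplus (d k) v (perp v) one (perp_spec v)
    rwa [seq_one] at this
  have hpair : ∀ k : ℕ, k < 2^n → oplus (d' (2*k)) (d' (2*k+1)) = some (d k) := by
    intro k hk
    rw [hd'e, hd'o]
    exact hpair2 k hk
  refine ⟨d', ⟨?_, ?_, ?_, ?_⟩, ?_⟩
  · -- words
    intro j hj
    rw [hd'def]
    simp only
    split
    · exact IsWord.sq (hword (j/2) (by omega)) (IsWord.base hva)
    · exact IsWord.sq (hword (j/2) (by omega)) (IsWord.perp (IsWord.base hva))
  · -- total
    rw [show (2:ℕ)^(n+1) = 2*2^n from hpow]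
    exact psum_pair htot (fun k hk => hpair k hk)
  · -- lower bounds
    intro j hj
    have hk2 : j/2 < 2^n := by omega
    rcases Nat.even_or_odd j with ⟨k, hkj⟩ | ⟨k, hkj⟩
    · have hj2k : j = 2*k := by omega
      subst hj2k
      rw [hd'e]
      have hkn : k < 2^n := by omega
      have hcast : ((2*k:ℕ):ℝ)/(2:ℝ)^(n+1) = (k:ℝ)/(2:ℝ)^n := by
        push_cast
        rw [pow_succ]
        field_simp
      rw [hcast]
      exact hcl k hkn
    · have hj2k : j = 2*k+1 := by omega
      subst hj2k
      rw [hd'o]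
      exact hc'l k (by omega)
  · -- upper bounds
    intro j hj
    rcases Nat.even_or_odd j with ⟨k, hkj⟩ | ⟨k, hkj⟩
    · have hj2k : j = 2*k := by omega
      subst hj2k
      rw [hd'e]
      have hcast : (((2*k:ℕ):ℝ)+1)/(2:ℝ)^(n+1) = ((2*k+1:ℕ):ℝ)/(2:ℝ)^(n+1) := by
        push_cast; ring
      rw [hcast]
      exact hcu k (by omega)
    · have hj2k : j = 2*k+1 := by omega
      subst hj2k
      rw [hd'o]
      have hcast : (((2*k+1:ℕ):ℝ)+1)/(2:ℝ)^(n+1) = ((k:ℝ)+1)/(2:ℝ)^n := by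
        push_cast
        rw [pow_succ]
        field_simp
        ring
      rw [hcast]
      exact hc'u k (by omega)
  · -- monotonicity link
    intro s s' hs hs'
    set term : ℕ → E := fun j => smul ((j:ℝ)/(2:ℝ)^(n+1)) (d' j) with hterm
    -- pairwise sums
    have htermle : ∀ k : ℕ, k < 2^n →
        le (term (2*k)) (SEA.seq (d k) v) ∧ le (term (2*k+1)) (SEA.seq (d k) (perp v)) := by
      intro k hk
      constructor
      · rw [hterm]; simp only; rw [hd'e]
        refine smul_le_self (by positivity) ?_
        rw [div_le_one (by positivity)]
        have : (2*k : ℕ) ≤ 2^(n+1) := by omega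
        exact_mod_cast this
      · rw [hterm]; simp only; rw [hd'o]
        refine smul_le_self (by positivity) ?_
        rw [div_le_one (by positivity)]
        have : (2*k+1 : ℕ) ≤ 2^(n+1) := by omega
        exact_mod_cast this
    set w : ℕ → E := fun k => (oplus (term (2*k)) (term (2*k+1))).getD zero with hwdef
    have hw : ∀ k : ℕ, k < 2^n → oplus (term (2*k)) (term (2*k+1)) = some (w k) ∧ le (w k) (d k) := by
      intro k hk
      obtain ⟨sk, hsk, hskle⟩ :=
        oplus_le_oplus (htermle k hk).1 (htermle k hk).2 (hpair2 k hk)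
      have : w k = sk := by rw [hwdef]; simp only; rw [hsk]; rfl
      rw [this]
      exact ⟨hsk, hskle⟩
    obtain ⟨W, hW, _⟩ := psum_le_psum htot (fun k hk => (hw k hk).2)
    have hterm2 : psum term (2*2^n) = some W := psum_pair hW (fun k hk => (hw k hk).1)
    have hWs' : W = s' := by
      rw [← hpow] at hterm2
      rw [hterm2] at hs'
      exact Option.some.inj hs'
    -- componentwise : smul (k/2^n) (d k) ≤ w k
    have hcomp_le : ∀ k : ℕ, k < 2^n → le (smul ((k:ℝ)/(2:ℝ)^n) (d k)) (w k) := by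
      intro k hk
      have hl0 : (0:ℝ) ≤ (k:ℝ)/(2:ℝ)^n := by positivity
      have hl1 : (k:ℝ)/(2:ℝ)^n ≤ 1 := by
        rw [div_le_one (by positivity)]
        exact_mod_cast le_of_lt hk
      have hsplit : oplus (smul ((k:ℝ)/(2:ℝ)^n) (SEA.seq (d k) v))
          (smul ((k:ℝ)/(2:ℝ)^n) (SEA.seq (d k) (perp v)))
          = some (smul ((k:ℝ)/(2:ℝ)^n) (d k)) :=
        smul_oplus _ _ _ _ hl0 hl1 (hpair2 k hk)
      have hteq : term (2*k) = smul ((k:ℝ)/(2:ℝ)^n) (SEA.seq (d k) v) := by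
        rw [hterm]; simp only; rw [hd'e]
        congr 1
        push_cast
        rw [pow_succ]
        field_simp
      have hmono : le (smul ((k:ℝ)/(2:ℝ)^n) (SEA.seq (d k) (perp v))) (term (2*k+1)) := by
        rw [hterm]; simp only; rw [hd'o]
        refine smul_le_smul_coeff hl0 ?_ ?_
        · have h2n : (0:ℝ) < 2^n := by positivity
          rw [div_le_div_iff₀ (by positivity) (by positivity)]
          push_cast
          rw [pow_succ]
          nlinarith [h2n]
        · rw [div_le_one (by positivity)]
          have : (2*k+1 : ℕ) ≤ 2^(n+1) := by omega
          exact_mod_cast this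
      have := le_of_oplus_le_oplus (hteq ▸ hsplit) (hw k hk).1 hmono
      exact this
    obtain ⟨T, hT, hTW⟩ := psum_le_psum hW hcomp_le
    rw [hs] at hT
    rw [← hWs']
    exact (Option.some.inj hT) ▸ hTW

end EffectAlgebra
end Aux9
section Aux10
namespace EffectAlgebra

variable {E : Type u} [EffectAlgebra E] [SEA E] [ConvexEA E]
set_option linter.unusedSectionVars false
set_option maxHeartbeats 1000000

open ConvexEA

lemma inv_approx {a : E} {n : ℕ} {d : ℕ → E} (h : Inv a n d) :
    ∃ s : E, psum (fun k => smul ((k:ℝ)/(2:ℝ)^n) (d k)) (2^n) = some s ∧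
      ∃ r : E, oplus s r = some a ∧ le r (smul ((1/2:ℝ)^n) one) := by
  obtain ⟨hword, htot, hlow, hup⟩ := h
  have hsharp : ∀ k < 2^n, Sharp (d k) := fun k hk => wordA_sharp (hword k hk)
  have hcm : ∀ i < 2^n, ∀ j < 2^n, Commutes (d i) (d j) :=
    fun i hi j hj => wordA_pairwise (hword i hi) (hword j hj)
  have hda : ∀ k < 2^n, Commutes (d k) a := fun k hk => wordA_commutes (hword k hk)
  have hda_sum : psum (fun k => SEA.seq (d k) a) (2^n) = some a := by
    have := psum_seq_left htot hsharp hcm hda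
    rwa [SEA.one_seq] at this
  have hpowe : (1/2:ℝ)^n = 1/(2:ℝ)^n := by rw [div_pow, one_pow]
  have hsplitk : ∀ k : ℕ, k < 2^n → ∃ ρ : E,
      oplus (smul ((k:ℝ)/(2:ℝ)^n) (d k)) ρ = some (SEA.seq (d k) a) ∧
        le ρ (smul ((1/2:ℝ)^n) (d k)) := by
    intro k hk
    obtain ⟨ρ, hρ⟩ := hlow k hk
    have hco : oplus (smul ((k:ℝ)/(2:ℝ)^n) (d k)) (smul ((1/2:ℝ)^n) (d k))
        = some (smul (((k:ℝ)+1)/(2:ℝ)^n) (d k)) := by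
      rw [hpowe]
      have hco2 := smul_add_coeff ((k:ℝ)/(2:ℝ)^n) (1/(2:ℝ)^n) (d k) (by positivity)
        (by positivity) (by
          rw [← add_div, div_le_one (by positivity)]
          have : (k+1:ℕ) ≤ 2^n := hk
          exact_mod_cast this)
      rwa [← add_div] at hco2
    exact ⟨ρ, hρ, le_cancel hρ hco (hup k hk)⟩
  set ρ : ℕ → E := fun k => if hk : k < 2^n then Classical.choose (hsplitk k hk) else zero
    with hρdef
  have hρspec : ∀ k : ℕ, k < 2^n →
      oplus (smul ((k:ℝ)/(2:ℝ)^n) (d k)) (ρ k) = some (SEA.seq (d k) a) ∧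
        le (ρ k) (smul ((1/2:ℝ)^n) (d k)) := by
    intro k hk
    have : ρ k = Classical.choose (hsplitk k hk) := by rw [hρdef]; simp only [dif_pos hk]
    rw [this]
    exact Classical.choose_spec (hsplitk k hk)
  obtain ⟨X, Y, hX, hY, hXY⟩ := psum_split hda_sum (fun k hk => (hρspec k hk).1)
  refine ⟨X, hX, Y, hXY, ?_⟩
  have hsm : psum (fun k => smul ((1/2:ℝ)^n) (d k)) (2^n) = some (smul ((1/2:ℝ)^n) one) :=
    psum_smul (by positivity) (by apply pow_le_one₀ <;> norm_num) htot
  obtain ⟨T, hT, hTle⟩ := psum_le_psum hsm (fun k hk => (hρspec k hk).2)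
  rw [hY] at hT
  exact (Option.some.inj hT) ▸ hTle

lemma sup_of_approx (harch : StronglyArchimedean E) {a : E} {s : ℕ → E}
    (h : ∀ n : ℕ, ∃ r : E, oplus (s n) r = some a ∧ le r (smul ((1/2:ℝ)^n) one)) :
    IsSupSeq s a := by
  constructor
  · intro n; obtain ⟨r, hr, _⟩ := h n; exact le_of_oplus hr
  · intro u hu
    -- (1/2)u ⊕ (1/2)1 is defined
    have hUC : ∃ t : E, oplus (smul (1/2:ℝ) u) (smul (1/2:ℝ) one) = some t := by
      have hC : oplus (smul (1/2:ℝ) u) (smul (1/2:ℝ) (perp u)) = some (smul (1/2:ℝ) one) :=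
        smul_oplus _ _ _ _ (by norm_num) (by norm_num) (perp_spec u)
      have h2 : le (smul (1/2:ℝ) (perp u)) (perp u) := smul_le_self (by norm_num) (by norm_num)
      obtain ⟨t0, ht0, _⟩ := oplus_le_right (perp_spec u) h2
      obtain ⟨bc, hbc, habc⟩ := oplus_assoc (half_double u) ht0
      rw [hC] at hbc
      rw [← Option.some.inj hbc] at habc
      exact ⟨t0, habc⟩
    obtain ⟨t, ht⟩ := hUC
    have harch' : ∀ x y c : E,
        (∀ n : ℕ, ∃ dd : E, oplus y (smul (1/(n+1) : ℝ) c) = some dd ∧ le x dd) → le x y := harch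
    apply le_of_half_le_half
    apply harch' (smul (1/2:ℝ) a) (smul (1/2:ℝ) u) (smul (1/2:ℝ) one)
    intro m
    have hn2 : (m+1 : ℕ) < 2^(m+1) := Nat.lt_two_pow_self
    obtain ⟨r, hr, hrb⟩ := h (m+1)
    have hm1 : (0:ℝ) < (m:ℝ)+1 := by positivity
    have hsmulC : smul (1/((m:ℝ)+1)) (smul (1/2:ℝ) (one:E)) = smul ((1/2)*(1/((m:ℝ)+1))) (one:E) := by
      apply ConvexEA.smul_smul
      · norm_num
      · norm_num
      · positivity
      · rw [div_le_one hm1]; linarith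
    have hle1 : le (smul ((1/2)*(1/((m:ℝ)+1))) (one:E)) (smul (1/2:ℝ) (one:E)) := by
      have h6 : (1:ℝ)/((m:ℝ)+1) ≤ 1 := by rw [div_le_one hm1]; linarith
      apply smul_le_smul_coeff (by positivity) (by nlinarith) (by norm_num)
    obtain ⟨dd, hdd, _⟩ := oplus_le_right ht hle1
    refine ⟨dd, by rw [hsmulC]; exact hdd, ?_⟩
    -- (1/2)a ≤ dd
    have hA : oplus (smul (1/2:ℝ) (s (m+1))) (smul (1/2:ℝ) r) = some (smul (1/2:ℝ) a) :=
      smul_oplus _ _ _ _ (by norm_num) (by norm_num) hr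
    have h1 : le (smul (1/2:ℝ) (s (m+1))) (smul (1/2:ℝ) u) :=
      smul_le_smul_elem (by norm_num) (by norm_num) (hu (m+1))
    have h2 : le (smul (1/2:ℝ) r) (smul ((1/2)*(1/((m:ℝ)+1))) one) := by
      have h3 : le (smul (1/2:ℝ) r) (smul (1/2:ℝ) (smul ((1/2:ℝ)^(m+1)) one)) :=
        smul_le_smul_elem (by norm_num) (by norm_num) hrb
      have h4 : smul (1/2:ℝ) (smul ((1/2:ℝ)^(m+1)) (one:E)) = smul ((1/2:ℝ)^(m+1)*(1/2)) (one:E) := by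
        apply ConvexEA.smul_smul
        · positivity
        · apply pow_le_one₀ <;> norm_num
        · norm_num
        · norm_num
      have h5 : le (smul ((1/2:ℝ)^(m+1)*(1/2)) (one:E)) (smul ((1/2)*(1/((m:ℝ)+1))) (one:E)) := by
        have hpow2 : (1/2:ℝ)^(m+1) ≤ 1/((m:ℝ)+1) := by
          rw [div_pow, one_pow, div_le_div_iff₀ (by positivity) hm1, one_mul, one_mul]
          exact_mod_cast le_of_lt hn2
        have h6 : (1:ℝ)/((m:ℝ)+1) ≤ 1 := by rw [div_le_one hm1]; linarith
        have h7 : (0:ℝ) < (1:ℝ)/((m:ℝ)+1) := by positivity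
        have h8 : (0:ℝ) ≤ (1/2:ℝ)^(m+1) := by positivity
        apply smul_le_smul_coeff (by positivity) (by nlinarith) (by nlinarith)
      exact le_trans h3 (h4 ▸ h5)
    obtain ⟨A0, hA0, hA0le⟩ := oplus_le_oplus h1 h2 hdd
    rw [hA] at hA0
    exact (Option.some.inj hA0) ▸ hA0le

end EffectAlgebra
end Aux10
section Aux11
namespace EffectAlgebra

open ConvexEA

variable {E : Type u} [EffectAlgebra E] [SEA E] [ConvexEA E]
set_option linter.unusedSectionVars false
set_option maxHeartbeats 1000000

/-- the canonical chain of approximating partitions -/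
noncomputable def chainD
    (hcomp : ∀ e f : E, sCommuteC e f → ∃ p : E, p ∈ sPbicomm e ∧ p ∈ sPbicomm f ∧
      le (SEA.seq p e) (SEA.seq p f) ∧ le (SEA.seq (perp p) f) (SEA.seq (perp p) e))
    (a : E) : (n : ℕ) → {d : ℕ → E // Inv a n d}
  | 0 => ⟨fun _ => one, base_inv a⟩
  | n+1 => ⟨Classical.choose (refine_step hcomp (chainD hcomp a n).2),
      (Classical.choose_spec (refine_step hcomp (chainD hcomp a n).2)).1⟩

variable
    (hcomp : ∀ e f : E, sCommuteC e f → ∃ p : E, p ∈ sPbicomm e ∧ p ∈ sPbicomm f ∧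
      le (SEA.seq p e) (SEA.seq p f) ∧ le (SEA.seq (perp p) f) (SEA.seq (perp p) e))

/-- the simple approximants -/
noncomputable def sVal (a : E) (n : ℕ) : E :=
  Classical.choose (inv_approx (chainD hcomp a n).2)

lemma sVal_psum (a : E) (n : ℕ) :
    psum (fun k => smul ((k:ℝ)/(2:ℝ)^n) ((chainD hcomp a n).1 k)) (2^n)
      = some (sVal hcomp a n) :=
  (Classical.choose_spec (inv_approx (chainD hcomp a n).2)).1

lemma sVal_approx (a : E) (n : ℕ) :
    ∃ r : E, oplus (sVal hcomp a n) r = some a ∧ le r (smul ((1/2:ℝ)^n) one) :=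
  (Classical.choose_spec (inv_approx (chainD hcomp a n).2)).2

lemma sVal_mono (a : E) (n : ℕ) : le (sVal hcomp a n) (sVal hcomp a (n+1)) := by
  have hlink := (Classical.choose_spec (refine_step hcomp (chainD hcomp a n).2)).2
  apply hlink
  · exact sVal_psum hcomp a n
  · have hdef : (chainD hcomp a (n+1)).1
        = Classical.choose (refine_step hcomp (chainD hcomp a n).2) := by
      rw [chainD]
    have h2 := sVal_psum hcomp a (n+1)
    rw [hdef] at h2
    exact h2

lemma sVal_commutes {a b : E}
    (hab : ∀ p ∈ sPbicomm a, ∀ q ∈ sPbicomm b, Commutes p q) (n m : ℕ) :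
    Commutes (sVal hcomp a n) (sVal hcomp b m) := by
  have hwa := (chainD hcomp a n).2.1
  have hwb := (chainD hcomp b m).2.1
  refine psum_commutes (fun j hj => ?_) (sVal_psum hcomp b m)
  refine (psum_commutes (fun k hk => ?_) (sVal_psum hcomp a n)).symm
  -- Commutes (smul (j/2^m) (db j)) (smul (k/2^n) (da k))
  exact commutes_smul_smul
    (wordA_sharp (hwb j hj)) (wordA_sharp (hwa k hk))
    (word_cross (fun q hq p hp => (hab p hp q hq).symm) (hwb j hj) (hwa k hk))
    (dyad_div (le_of_lt hj)) (dyad_div (le_of_lt hk))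

end EffectAlgebra
end Aux11
open EffectAlgebra in
/-- in a strongly archimedean convex SEA with property A having the
b-comparability property, `aCb` implies `a|b`. -/
theorem stmt10 {E : Type u} [EffectAlgebra E] [SEA E] [ConvexEA E]
    (harch : StronglyArchimedean E) (hA : PropertyA E)
    (hbc : sBComparability E) :
    ∀ a b : E, sCommuteC a b → Commutes a b := by
  intro a b hab
  have hcomp := hbc.2
  -- commutation of the bicommutant projections
  have hcross : ∀ p ∈ sPbicomm a, ∀ q ∈ sPbicomm b, Commutes p q := by
    intro p hp q hq
    exact commutes_of_mcompat (sPbicomm_sharp hp) (hab p hp q hq)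
  have hpairA : ∀ p ∈ sPbicomm a, ∀ q ∈ sPbicomm a, Commutes p q :=
    fun p hp q hq => sPbicomm_pairwise hp hq
  have hpairB : ∀ p ∈ sPbicomm b, ∀ q ∈ sPbicomm b, Commutes p q :=
    fun p hp q hq => sPbicomm_pairwise hp hq
  -- the approximating sequences
  have hsupa : IsSupSeq (sVal hcomp a) a :=
    sup_of_approx harch (fun n => sVal_approx hcomp a n)
  have hsupb : IsSupSeq (sVal hcomp b) b :=
    sup_of_approx harch (fun n => sVal_approx hcomp b n)
  have hasca : ∀ n, le (sVal hcomp a n) (sVal hcomp a (n+1)) := sVal_mono hcomp a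
  have hascb : ∀ n, le (sVal hcomp b n) (sVal hcomp b (n+1)) := sVal_mono hcomp b
  have hmuta : ∀ n m, Commutes (sVal hcomp a n) (sVal hcomp a m) :=
    fun n m => sVal_commutes hcomp hpairA n m
  have hmutb : ∀ n m, Commutes (sVal hcomp b n) (sVal hcomp b m) :=
    fun n m => sVal_commutes hcomp hpairB n m
  have hcr : ∀ n m, Commutes (sVal hcomp a n) (sVal hcomp b m) :=
    fun n m => sVal_commutes hcomp hcross n m
  -- inner limit : each a-approximant commutes with b
  have hstep : ∀ n, Commutes (sVal hcomp a n) b := by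
    intro n
    have := hA (sVal hcomp b) b (sVal hcomp a n) hascb hmutb hsupb (fun m => (hcr n m).symm)
    exact this.symm
  -- outer limit
  exact hA (sVal hcomp a) a b hasca hmuta hsupa hstep
end

section
/- Let E be a convex SEA in which every element is simple. Then every a∈E has a unique reduced representation, i.e., if a=⊕_{i=1}^n μ_i p_i=⊕_{j=1}^m ν_j q_j with sharp elements p_i (resp. q_j) satisfying ⊕_i p_i=1, ⊕_j q_j=1 and coefficients μ_1<…<μ_n, ν_1<…<ν_m in [0,1], then n=m, μ_i=ν_i and p_i=q_i for all i. -/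
universe u

namespace Stmt18Aux

open EffectAlgebra

variable {E : Type u} [EffectAlgebra E]

theorem oplus_perp (a : E) : oplus a (perp a) = some one :=
  Classical.choose_spec (exists_perp a)

theorem perp_eq {a b : E} (h : oplus a b = some one) : perp a = b :=
  perp_unique (oplus_perp a) h

theorem cancel {a b c d : E} (h1 : oplus a b = some d) (h2 : oplus a c = some d) : b = c := by
  have hd : oplus d (perp d) = some one := oplus_perp d
  have h1' : oplus b a = some d := by rw [oplus_comm]; exact h1
  have h2' : oplus c a = some d := by rw [oplus_comm]; exact h2
  obtain ⟨f, hf1, hf2⟩ := oplus_assoc h1' hd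
  obtain ⟨g, hg1, hg2⟩ := oplus_assoc h2' hd
  have hfg : f = g := Option.some.inj (hf1.symm.trans hg1)
  subst hfg
  have hb : oplus f b = some one := by rw [oplus_comm]; exact hf2
  have hc : oplus f c = some one := by rw [oplus_comm]; exact hg2
  exact perp_unique hb hc

theorem perp_one : perp (one : E) = zero := by
  have h' : oplus (perp (one : E)) one = some one := by rw [oplus_comm]; exact oplus_perp one
  exact oplus_one h'

theorem oplus_zero (a : E) : oplus a zero = some a := by
  have h1 : oplus (perp a) a = some one := by rw [oplus_comm]; exact oplus_perp a
  have h2 : oplus (one : E) zero = some one := by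
    have := oplus_perp (one : E); rwa [perp_one] at this
  obtain ⟨bc, hbc1, hbc2⟩ := oplus_assoc h1 h2
  have : a = bc := perp_unique h1 hbc2
  rw [← this] at hbc1; exact hbc1

theorem zero_oplus (a : E) : oplus zero a = some a := by rw [oplus_comm]; exact oplus_zero a

theorem eq_zero_right {a b : E} (h : oplus a b = some zero) : b = zero := by
  have h2 : oplus (zero : E) one = some one := zero_oplus one
  obtain ⟨f, hf1, _⟩ := oplus_assoc h h2
  exact oplus_one hf1

theorem eq_zero_left {a b : E} (h : oplus a b = some zero) : a = zero := by
  have hb := eq_zero_right h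
  subst hb
  exact Option.some.inj ((oplus_zero a).symm.trans h)

theorem le_refl' (a : E) : le a a := ⟨zero, oplus_zero a⟩

theorem le_zero' {a : E} (h : le a zero) : a = zero := by
  obtain ⟨c, hc⟩ := h; exact eq_zero_left hc

theorem le_one' (a : E) : le a one := ⟨perp a, oplus_perp a⟩

theorem le_trans' {a b c : E} (h1 : le a b) (h2 : le b c) : le a c := by
  obtain ⟨u, hu⟩ := h1; obtain ⟨v, hv⟩ := h2
  obtain ⟨w, _, hw2⟩ := oplus_assoc hu hv
  exact ⟨w, hw2⟩

theorem oplus_assoc' {a b c bc s : E} (h1 : oplus b c = some bc) (h2 : oplus a bc = some s) :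
    ∃ ab, oplus a b = some ab ∧ oplus ab c = some s := by
  have h1' : oplus c b = some bc := by rw [oplus_comm]; exact h1
  have h2' : oplus bc a = some s := by rw [oplus_comm]; exact h2
  obtain ⟨ba, hba1, hba2⟩ := oplus_assoc h1' h2'
  exact ⟨ba, by rw [oplus_comm]; exact hba1, by rw [oplus_comm]; exact hba2⟩

theorem le_cancel' {r x c s t : E} (h1 : oplus r x = some s) (h2 : le s t)
    (h3 : oplus r c = some t) : le x c := by
  obtain ⟨d, hd⟩ := h2
  obtain ⟨xd, hxd1, hxd2⟩ := oplus_assoc h1 hd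
  have hxc : xd = c := cancel hxd2 h3
  exact ⟨d, hxc ▸ hxd1⟩

theorem mono_left {a a' b s : E} (h : le a a') (h2 : oplus a' b = some s) :
    ∃ t, oplus a b = some t ∧ le t s := by
  obtain ⟨u, hu⟩ := h
  obtain ⟨ub, h1, h2'⟩ := oplus_assoc hu h2
  have h1' : oplus b u = some ub := by rw [oplus_comm]; exact h1
  obtain ⟨ab, hab1, hab2⟩ := oplus_assoc' h1' h2'
  exact ⟨ab, hab1, ⟨u, hab2⟩⟩

theorem mono_right {a b b' s : E} (h : le b b') (h2 : oplus a b' = some s) :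
    ∃ t, oplus a b = some t ∧ le t s := by
  have h2' : oplus b' a = some s := by rw [oplus_comm]; exact h2
  obtain ⟨t, ht1, ht2⟩ := mono_left h h2'
  exact ⟨t, by rw [oplus_comm]; exact ht1, ht2⟩

theorem mono_pair {a a' b b' s : E} (ha : le a a') (hb : le b b') (h : oplus a' b' = some s) :
    ∃ t, oplus a b = some t ∧ le t s := by
  obtain ⟨t1, h1, ht1⟩ := mono_right hb h
  obtain ⟨t, h2, ht⟩ := mono_left ha h1
  exact ⟨t, h2, le_trans' ht ht1⟩

theorem perp_perp' (a : E) : perp (perp a) = a :=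
  perp_eq (by rw [oplus_comm]; exact oplus_perp a)

theorem osum_nil : osum ([] : List E) = some zero := rfl

theorem osum_cons {a t : E} {l : List E} (h : osum (a :: l) = some t) :
    ∃ u, osum l = some u ∧ oplus a u = some t := by
  have h' : (osum l).bind (fun s => oplus a s) = some t := h
  cases hl : osum l with
  | none => rw [hl] at h'; simp at h'
  | some u => rw [hl] at h'; exact ⟨u, rfl, by simpa using h'⟩

theorem osum_cons_eq {a u t : E} {l : List E} (h1 : osum l = some u) (h2 : oplus a u = some t) :
    osum (a :: l) = some t := by
  show (osum l).bind (fun s => oplus a s) = some t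
  rw [h1]; simpa using h2

section Convex

variable [ConvexEA E]

theorem csmul_zero {l : ℝ} (h0 : 0 ≤ l) (h1 : l ≤ 1) : ConvexEA.smul l (zero : E) = zero := by
  have h := ConvexEA.smul_oplus l (zero : E) zero zero h0 h1 (oplus_zero zero)
  exact cancel h (oplus_zero _)

theorem smul_le_coeff {l m : ℝ} (a : E) (h0 : 0 ≤ l) (h1 : l ≤ m) (h2 : m ≤ 1) :
    le (ConvexEA.smul l a) (ConvexEA.smul m a) := by
  have h := ConvexEA.smul_add_coeff l (m - l) a h0 (by linarith) (by linarith)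
  rw [show l + (m - l) = m by ring] at h
  exact ⟨_, h⟩

theorem smul_le_self {l : ℝ} (a : E) (h0 : 0 ≤ l) (h1 : l ≤ 1) :
    le (ConvexEA.smul l a) a := by
  have := smul_le_coeff a h0 h1 le_rfl
  rwa [ConvexEA.one_smul] at this

theorem smul_mono' {l : ℝ} {a b : E} (h0 : 0 ≤ l) (h1 : l ≤ 1) (h : le a b) :
    le (ConvexEA.smul l a) (ConvexEA.smul l b) := by
  obtain ⟨d, hd⟩ := h
  exact ⟨_, ConvexEA.smul_oplus l a d b h0 h1 hd⟩

theorem half_eq {x v : E} (h : oplus x x = some v) : x = ConvexEA.smul 2⁻¹ v := by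
  have h1 := ConvexEA.smul_oplus 2⁻¹ x x v (by norm_num) (by norm_num) h
  have h2 := ConvexEA.smul_add_coeff 2⁻¹ 2⁻¹ x (by norm_num) (by norm_num) (by norm_num)
  rw [show (2⁻¹ + 2⁻¹ : ℝ) = 1 by norm_num, ConvexEA.one_smul] at h2
  exact Option.some.inj (h2.symm.trans h1)

theorem smul_pos_zero {l : ℝ} {a : E} (h0 : 0 < l) (h1 : l ≤ 1)
    (h : ConvexEA.smul l a = zero) : a = zero := by
  have key : oplus (ConvexEA.smul l a) (ConvexEA.smul (1 - l) a) = some a := by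
    have := ConvexEA.smul_add_coeff l (1 - l) a (le_of_lt h0) (by linarith) (by linarith)
    rwa [show l + (1 - l) = 1 by ring, ConvexEA.one_smul] at this
  rw [h, zero_oplus] at key
  have ha : ConvexEA.smul (1 - l) a = a := Option.some.inj key
  have hk : ∀ k : ℕ, ConvexEA.smul ((1 - l) ^ k) a = a := by
    intro k
    induction k with
    | zero => rw [pow_zero, ConvexEA.one_smul]
    | succ n ihn =>
      have hb0 : (0:ℝ) ≤ (1 - l) ^ n := pow_nonneg (by linarith) n
      have hb1 : (1 - l) ^ n ≤ 1 := pow_le_one₀ (by linarith) (by linarith)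
      have hss := ConvexEA.smul_smul ((1 - l) ^ n) (1 - l) a hb0 hb1 (by linarith) (by linarith)
      rw [ihn] at hss
      rw [pow_succ, ← hss, ha]
  obtain ⟨k, hklt⟩ := exists_pow_lt_of_lt_one h0 (show (1:ℝ) - l < 1 by linarith)
  have hle := smul_le_coeff a (pow_nonneg (by linarith) k) (le_of_lt hklt) h1
  rw [hk k, h] at hle
  exact le_zero' hle

theorem osum_map_smul {l : List (ℝ × E)} {g : ℝ × E → E} {lam : ℝ} {s : E}
    (h0 : 0 ≤ lam) (h1 : lam ≤ 1) (h : osum (l.map g) = some s) :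
    osum (l.map fun x => ConvexEA.smul lam (g x)) = some (ConvexEA.smul lam s) := by
  induction l generalizing s with
  | nil =>
    simp only [List.map_nil] at h ⊢
    rw [osum_nil] at h
    have hs : s = zero := (Option.some.inj h).symm
    rw [osum_nil, hs, csmul_zero h0 h1]
  | cons x xs ih =>
    simp only [List.map_cons] at h ⊢
    obtain ⟨u, hu, hx⟩ := osum_cons h
    exact osum_cons_eq (ih hu) (ConvexEA.smul_oplus lam (g x) u s h0 h1 hx)

theorem osum_le {l : List (ℝ × E)} {f g : ℝ × E → E} (hfg : ∀ x ∈ l, le (f x) (g x)) {s : E}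
    (h : osum (l.map g) = some s) : ∃ t, osum (l.map f) = some t ∧ le t s := by
  induction l generalizing s with
  | nil =>
    simp only [List.map_nil] at h ⊢
    rw [osum_nil] at h
    have hs : s = zero := (Option.some.inj h).symm
    exact ⟨zero, osum_nil, by rw [hs]; exact le_refl' zero⟩
  | cons x xs ih =>
    simp only [List.map_cons] at h ⊢
    obtain ⟨u, hu, hx⟩ := osum_cons h
    obtain ⟨t', ht', htu⟩ := ih (fun y hy => hfg y (List.mem_cons_of_mem _ hy)) hu
    obtain ⟨t, ht, hts⟩ := mono_pair (hfg x (List.mem_cons_self)) htu hx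
    exact ⟨t, osum_cons_eq ht' ht, hts⟩

theorem scale_le {l : List (ℝ × E)} (hcond : ∀ x ∈ l, 0 ≤ x.1 ∧ x.1 ≤ 1) {lam : ℝ}
    (hl0 : 0 ≤ lam) (hl1 : lam ≤ 1) (hlle : ∀ x ∈ l, lam ≤ x.1) {s c : E}
    (hs : osum (l.map Prod.snd) = some s)
    (hc : osum (l.map fun x => ConvexEA.smul x.1 x.2) = some c) :
    le (ConvexEA.smul lam s) c := by
  have h1 := osum_map_smul (g := Prod.snd) hl0 hl1 hs
  obtain ⟨t, ht, htc⟩ := osum_le (f := fun x => ConvexEA.smul lam x.2)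
    (g := fun x => ConvexEA.smul x.1 x.2)
    (fun x hx => smul_le_coeff x.2 hl0 (hlle x hx) (hcond x hx).2) hc
  have hts : t = ConvexEA.smul lam s := Option.some.inj (ht.symm.trans h1)
  rwa [← hts]

theorem lower_bound {mu lam : ℝ} {p t₁ s c c₁ : E} (hp : Sharp p) (hp0 : p ≠ zero)
    (hmu0 : 0 ≤ mu) (hlam1 : lam ≤ 1) (hpt : oplus p t₁ = some s)
    (hc : oplus (ConvexEA.smul mu p) c₁ = some c) (hc₁ : le c₁ t₁)
    (hlc : le (ConvexEA.smul lam s) c) : lam ≤ mu := by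
  by_contra hcon
  push_neg at hcon
  have hlam0 : 0 ≤ lam := by linarith
  have h2 : le (ConvexEA.smul lam p) c :=
    le_trans' (smul_mono' hlam0 hlam1 ⟨t₁, hpt⟩) hlc
  have h3 : oplus (ConvexEA.smul mu p) (ConvexEA.smul (lam - mu) p)
      = some (ConvexEA.smul lam p) := by
    have := ConvexEA.smul_add_coeff mu (lam - mu) p hmu0 (by linarith) (by linarith)
    rwa [show mu + (lam - mu) = lam by ring] at this
  have h4 : le (ConvexEA.smul (lam - mu) p) c₁ := le_cancel' h3 h2 hc
  have ht₁ : le t₁ (perp p) := le_cancel' hpt (le_one' s) (oplus_perp p)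
  have h5 : le (ConvexEA.smul (lam - mu) p) (perp p) := le_trans' (le_trans' h4 hc₁) ht₁
  have h6 : le (ConvexEA.smul (lam - mu) p) p := smul_le_self p (by linarith) (by linarith)
  have h7 := hp _ h6 h5
  exact hp0 (smul_pos_zero (by linarith) (by linarith) h7)

theorem key_lower {mu mu' : ℝ} {p t₁ s c c₁ : E} (h0 : 0 ≤ mu) (h1 : mu < mu') (h2 : mu' ≤ 1)
    (hpt : oplus p t₁ = some s) (hc : oplus (ConvexEA.smul mu p) c₁ = some c)
    (hle : le (ConvexEA.smul mu' t₁) c₁) :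
    ∃ X, oplus (ConvexEA.smul mu s) (ConvexEA.smul (mu' - mu) t₁) = some X ∧ le X c := by
  obtain ⟨Z, hZ, hZc⟩ := mono_right hle hc
  have hsplit : oplus (ConvexEA.smul mu t₁) (ConvexEA.smul (mu' - mu) t₁)
      = some (ConvexEA.smul mu' t₁) := by
    have := ConvexEA.smul_add_coeff mu (mu' - mu) t₁ h0 (by linarith) (by linarith)
    rwa [show mu + (mu' - mu) = mu' by ring] at this
  obtain ⟨ab, hab1, hab2⟩ := oplus_assoc' hsplit hZ
  have hms := ConvexEA.smul_oplus mu p t₁ s h0 (by linarith) hpt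
  have habs : ConvexEA.smul mu s = ab := Option.some.inj (hms.symm.trans hab1)
  exact ⟨Z, habs ▸ hab2, hZc⟩

theorem key_upper {mu : ℝ} {q t₂ s c c₂ : E} (h0 : 0 ≤ mu) (h1 : mu ≤ 1)
    (hqt : oplus q t₂ = some s) (hc : oplus (ConvexEA.smul mu q) c₂ = some c)
    (hle : le c₂ t₂) :
    ∃ Y, oplus (ConvexEA.smul mu s) (ConvexEA.smul (1 - mu) t₂) = some Y ∧ le c Y := by
  obtain ⟨W, hW1, _⟩ := mono_left (smul_le_self q h0 h1) hqt
  obtain ⟨C', hC'1, hC'2⟩ := mono_right hle hW1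
  have hCc : C' = c := Option.some.inj (hC'1.symm.trans hc)
  have hsplit : oplus (ConvexEA.smul mu t₂) (ConvexEA.smul (1 - mu) t₂) = some t₂ := by
    have := ConvexEA.smul_add_coeff mu (1 - mu) t₂ h0 (by linarith) (by linarith)
    rwa [show mu + (1 - mu) = 1 by ring, ConvexEA.one_smul] at this
  obtain ⟨ab, hab1, hab2⟩ := oplus_assoc' hsplit hW1
  have hms := ConvexEA.smul_oplus mu q t₂ s h0 h1 hqt
  have habs : ConvexEA.smul mu s = ab := Option.some.inj (hms.symm.trans hab1)
  exact ⟨W, habs ▸ hab2, hCc ▸ hC'2⟩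

end Convex

section Seq

variable [SEA E]

theorem seq_zero' (a : E) : SEA.seq a (zero : E) = zero := by
  have h := SEA.seq_oplus a zero zero zero (oplus_zero zero)
  exact cancel h (oplus_zero _)

theorem zero_seq' (a : E) : SEA.seq (zero : E) a = zero :=
  SEA.seq_zero_symm a zero (seq_zero' a)

theorem seq_one' (a : E) : SEA.seq a one = a := by
  have hcomm : SEA.seq a zero = SEA.seq zero a := by rw [seq_zero', zero_seq']
  have h := SEA.comm_perp a zero hcomm
  rw [perp_eq (zero_oplus (one : E))] at h
  rw [h]; exact SEA.one_seq a

theorem seq_mono' (a : E) {b c : E} (h : le b c) : le (SEA.seq a b) (SEA.seq a c) := by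
  obtain ⟨d, hd⟩ := h
  exact ⟨_, SEA.seq_oplus a b d c hd⟩

theorem sharp_seq_perp {q : E} (h : Sharp q) : SEA.seq q (perp q) = zero := by
  have hc : SEA.seq q (perp q) = SEA.seq (perp q) q := SEA.comm_perp q q rfl
  have h1 : le (SEA.seq q (perp q)) q := by
    have := seq_mono' q (le_one' (perp q))
    rwa [seq_one'] at this
  have h2 : le (SEA.seq q (perp q)) (perp q) := by
    rw [hc]
    have := seq_mono' (perp q) (le_one' q)
    rwa [seq_one'] at this
  exact h _ h1 h2

theorem idem_of_sharp {q : E} (h : Sharp q) : SEA.seq q q = q := by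
  have key := SEA.seq_oplus q q (perp q) one (oplus_perp q)
  rw [sharp_seq_perp h, seq_one'] at key
  exact Option.some.inj ((oplus_zero _).symm.trans key)

theorem seq_perp_of_idem {s : E} (h : SEA.seq s s = s) : SEA.seq s (perp s) = zero := by
  have key := SEA.seq_oplus s s (perp s) one (oplus_perp s)
  rw [h, seq_one'] at key
  exact cancel key (oplus_zero s)

end Seq

section SeqConvex

variable [SEA E] [ConvexEA E]

theorem seq_half (y z : E) :
    SEA.seq y (ConvexEA.smul 2⁻¹ z) = ConvexEA.smul 2⁻¹ (SEA.seq y z) := by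
  have hz : oplus (ConvexEA.smul 2⁻¹ z) (ConvexEA.smul 2⁻¹ z) = some z := by
    have := ConvexEA.smul_add_coeff 2⁻¹ 2⁻¹ z (by norm_num) (by norm_num) (by norm_num)
    rwa [show (2⁻¹ + 2⁻¹ : ℝ) = 1 by norm_num, ConvexEA.one_smul] at this
  exact half_eq (SEA.seq_oplus y _ _ z hz)

theorem seq_pow_half (y b : E) (k : ℕ) :
    SEA.seq y (ConvexEA.smul ((2:ℝ)⁻¹ ^ k) b)
      = ConvexEA.smul ((2:ℝ)⁻¹ ^ k) (SEA.seq y b) := by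
  induction k with
  | zero => rw [pow_zero, ConvexEA.one_smul, ConvexEA.one_smul]
  | succ n ihn =>
    have hb0 : (0:ℝ) ≤ 2⁻¹ ^ n := by positivity
    have hb1 : ((2:ℝ)⁻¹) ^ n ≤ 1 := pow_le_one₀ (by norm_num) (by norm_num)
    have e1 : ConvexEA.smul ((2:ℝ)⁻¹ ^ (n+1)) b
        = ConvexEA.smul 2⁻¹ (ConvexEA.smul ((2:ℝ)⁻¹ ^ n) b) := by
      rw [pow_succ]
      exact (ConvexEA.smul_smul _ _ b hb0 hb1 (by norm_num) (by norm_num)).symm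
    have e2 : ConvexEA.smul ((2:ℝ)⁻¹ ^ (n+1)) (SEA.seq y b)
        = ConvexEA.smul 2⁻¹ (ConvexEA.smul ((2:ℝ)⁻¹ ^ n) (SEA.seq y b)) := by
      rw [pow_succ]
      exact (ConvexEA.smul_smul _ _ _ hb0 hb1 (by norm_num) (by norm_num)).symm
    rw [e1, seq_half, ihn, ← e2]

theorem core {q x : E} (hq : SEA.seq q (perp q) = zero) {eps : ℝ} (h0 : 0 < eps)
    (h1 : eps ≤ 1) (h : le (ConvexEA.smul eps x) q) :
    SEA.seq x q = x ∧ SEA.seq q x = x ∧ le x q := by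
  have hq' : SEA.seq (perp q) q = zero := SEA.seq_zero_symm _ _ hq
  obtain ⟨k, hk⟩ := exists_pow_lt_of_lt_one h0 (show (2:ℝ)⁻¹ < 1 by norm_num)
  have hk0 : (0:ℝ) ≤ 2⁻¹ ^ k := by positivity
  have h2 : le (ConvexEA.smul ((2:ℝ)⁻¹ ^ k) x) q :=
    le_trans' (smul_le_coeff x hk0 (le_of_lt hk) h1) h
  have h3 := seq_mono' (perp q) h2
  rw [hq'] at h3
  have h4 : SEA.seq (perp q) (ConvexEA.smul ((2:ℝ)⁻¹ ^ k) x) = zero := le_zero' h3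
  rw [seq_pow_half] at h4
  have h6 : SEA.seq (perp q) x = zero :=
    smul_pos_zero (by positivity) (pow_le_one₀ (by norm_num) (by norm_num)) h4
  have h7 : SEA.seq x (perp q) = zero := SEA.seq_zero_symm _ _ h6
  have h8 : SEA.seq x q = x := by
    have key := SEA.seq_oplus x q (perp q) one (oplus_perp q)
    rw [h7, seq_one'] at key
    exact Option.some.inj ((oplus_zero _).symm.trans key)
  have h9 : SEA.seq q x = x := by
    have hcomm : SEA.seq x (perp q) = SEA.seq (perp q) x := by rw [h6, h7]
    have hcp := SEA.comm_perp x (perp q) hcomm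
    rw [perp_perp'] at hcp
    rw [← hcp, h8]
  refine ⟨h8, h9, ?_⟩
  have h10 := seq_mono' q (le_one' x)
  rwa [seq_one', h9] at h10

theorem sub_idem {s p t : E} (hs : SEA.seq s s = s) (hp : SEA.seq p p = p)
    (h : oplus p t = some s) : SEA.seq t t = t := by
  have hsperp := seq_perp_of_idem hs
  have hps : le p s := ⟨t, h⟩
  obtain ⟨hps1, hps2, _⟩ := core hsperp one_pos le_rfl
    (by rw [ConvexEA.one_smul]; exact hps)
  have hst : SEA.seq s t = t := by
    have key := SEA.seq_oplus s p t s h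
    rw [hs, hps2] at key
    exact cancel key h
  have hpt : SEA.seq p t = zero := by
    have key := SEA.seq_oplus p p t s h
    rw [hps1, hp] at key
    exact cancel key (oplus_zero p)
  have htp := SEA.seq_zero_symm _ _ hpt
  have hts : SEA.seq t s = t :=
    (core hsperp one_pos le_rfl
      (by rw [ConvexEA.one_smul]; exact ⟨p, by rw [oplus_comm]; exact h⟩)).1
  have key := SEA.seq_oplus t p t s h
  rw [htp, hts, zero_oplus] at key
  exact Option.some.inj key

theorem chain_lt {x : ℝ × E} {r : List (ℝ × E)}
    (h : ((x :: r).map Prod.fst).Chain' (· < ·)) : ∀ y ∈ r, x.1 < y.1 := by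
  intro y hy
  rw [List.map_cons, List.Chain', List.isChain_iff_pairwise] at h
  exact (List.pairwise_cons.mp h).1 y.1 (List.mem_map_of_mem (f := Prod.fst) hy)

theorem chain_tail {x : ℝ × E} {r : List (ℝ × E)}
    (h : ((x :: r).map Prod.fst).Chain' (· < ·)) : (r.map Prod.fst).Chain' (· < ·) := by
  rw [List.map_cons] at h
  exact h.tail

theorem aux (l₁ : List (ℝ × E)) : ∀ (l₂ : List (ℝ × E)) (s c : E),
    SEA.seq s s = s →
    (∀ x ∈ l₁, (0 ≤ x.1 ∧ x.1 ≤ 1) ∧ Sharp x.2 ∧ x.2 ≠ zero) →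
    (l₁.map Prod.fst).Chain' (· < ·) →
    (∀ x ∈ l₂, (0 ≤ x.1 ∧ x.1 ≤ 1) ∧ Sharp x.2 ∧ x.2 ≠ zero) →
    (l₂.map Prod.fst).Chain' (· < ·) →
    osum (l₁.map Prod.snd) = some s →
    osum (l₂.map Prod.snd) = some s →
    osum (l₁.map fun x => ConvexEA.smul x.1 x.2) = some c →
    osum (l₂.map fun x => ConvexEA.smul x.1 x.2) = some c →
    l₁ = l₂ := by
  induction l₁ with
  | nil =>
    intro l₂ s c _ _ _ hcond₂ _ hs₁ hs₂ _ _
    have hs0 : s = zero := by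
      simp only [List.map_nil, osum_nil] at hs₁
      exact (Option.some.inj hs₁).symm
    cases l₂ with
    | nil => rfl
    | cons y r =>
      exfalso
      simp only [List.map_cons] at hs₂
      obtain ⟨u, _, hy⟩ := osum_cons hs₂
      rw [hs0] at hy
      exact (hcond₂ y (List.mem_cons_self)).2.2 (eq_zero_left hy)
  | cons x₁ r₁ ih =>
    intro l₂ s c hss hcond₁ hch₁ hcond₂ hch₂ hs₁ hs₂ hc₁ hc₂
    cases l₂ with
    | nil =>
      exfalso
      have hs0 : s = zero := by
        simp only [List.map_nil, osum_nil] at hs₂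
        exact (Option.some.inj hs₂).symm
      simp only [List.map_cons] at hs₁
      obtain ⟨u, _, hx⟩ := osum_cons hs₁
      rw [hs0] at hx
      exact (hcond₁ x₁ (List.mem_cons_self)).2.2 (eq_zero_left hx)
    | cons x₂ r₂ =>
      obtain ⟨μ, p⟩ := x₁
      obtain ⟨ν, q⟩ := x₂
      have hs₁f := hs₁; have hs₂f := hs₂; have hc₁f := hc₁; have hc₂f := hc₂
      simp only [List.map_cons] at hs₁ hs₂ hc₁ hc₂
      obtain ⟨t₁, ht₁, hpt₁⟩ := osum_cons hs₁
      obtain ⟨t₂, ht₂, hqt₂⟩ := osum_cons hs₂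
      obtain ⟨c₁, hc₁', hmc₁⟩ := osum_cons hc₁
      obtain ⟨c₂, hc₂', hmc₂⟩ := osum_cons hc₂
      have hx₁ := hcond₁ (μ, p) (List.mem_cons_self)
      have hx₂ := hcond₂ (ν, q) (List.mem_cons_self)
      have hμ0 : 0 ≤ μ := hx₁.1.1
      have hμ1 : μ ≤ 1 := hx₁.1.2
      have hν0 : 0 ≤ ν := hx₂.1.1
      have hν1 : ν ≤ 1 := hx₂.1.2
      have hSp : Sharp p := hx₁.2.1
      have hSq : Sharp q := hx₂.2.1
      have hp0 : p ≠ zero := hx₁.2.2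
      have hq0 : q ≠ zero := hx₂.2.2
      -- c₁ ≤ t₁ and c₂ ≤ t₂
      have hc₁t₁ : le c₁ t₁ := by
        obtain ⟨t, ht, htt⟩ := osum_le (f := fun x => ConvexEA.smul x.1 x.2) (g := Prod.snd)
          (fun y hy => smul_le_self y.2 (hcond₁ y (List.mem_cons_of_mem _ hy)).1.1
            (hcond₁ y (List.mem_cons_of_mem _ hy)).1.2) ht₁
        rwa [Option.some.inj (ht.symm.trans hc₁')] at htt
      have hc₂t₂ : le c₂ t₂ := by
        obtain ⟨t, ht, htt⟩ := osum_le (f := fun x => ConvexEA.smul x.1 x.2) (g := Prod.snd)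
          (fun y hy => smul_le_self y.2 (hcond₂ y (List.mem_cons_of_mem _ hy)).1.1
            (hcond₂ y (List.mem_cons_of_mem _ hy)).1.2) ht₂
        rwa [Option.some.inj (ht.symm.trans hc₂')] at htt
      -- μ = ν
      have hμs : le (ConvexEA.smul μ s) c := by
        refine scale_le (fun z hz => (hcond₁ z hz).1) hμ0 hμ1 ?_ hs₁f hc₁f
        intro z hz
        rcases List.mem_cons.mp hz with h | h
        · rw [h]
        · exact (chain_lt hch₁ z h).le
      have hνs : le (ConvexEA.smul ν s) c := by
        refine scale_le (fun z hz => (hcond₂ z hz).1) hν0 hν1 ?_ hs₂f hc₂f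
        intro z hz
        rcases List.mem_cons.mp hz with h | h
        · rw [h]
        · exact (chain_lt hch₂ z h).le
      have hνμ : ν ≤ μ := lower_bound hSp hp0 hμ0 hν1 hpt₁ hmc₁ hc₁t₁ hνs
      have hμν' : μ ≤ ν := lower_bound hSq hq0 hν0 hμ1 hqt₂ hmc₂ hc₂t₂ hμs
      have hμν : μ = ν := le_antisymm hμν' hνμ
      subst hμν
      by_cases hμtop : μ = 1
      · -- both tails empty
        have hr₁ : r₁ = [] := by
          cases r₁ with
          | nil => rfl
          | cons y r =>
            exfalso
            have h1 := chain_lt hch₁ y (List.mem_cons_self)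
            have h2 := (hcond₁ y (List.mem_cons_of_mem _ (List.mem_cons_self))).1.2
            simp only at h1
            linarith [hμtop ▸ h1]
        have hr₂ : r₂ = [] := by
          cases r₂ with
          | nil => rfl
          | cons y r =>
            exfalso
            have h1 := chain_lt hch₂ y (List.mem_cons_self)
            have h2 := (hcond₂ y (List.mem_cons_of_mem _ (List.mem_cons_self))).1.2
            simp only at h1
            linarith [hμtop ▸ h1]
        subst hr₁; subst hr₂
        simp only [List.map_nil, osum_nil] at ht₁ ht₂
        have ht₁0 : t₁ = zero := (Option.some.inj ht₁).symm
        have ht₂0 : t₂ = zero := (Option.some.inj ht₂).symm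
        rw [ht₁0] at hpt₁; rw [ht₂0] at hqt₂
        have hps : p = s := Option.some.inj ((oplus_zero p).symm.trans hpt₁)
        have hqs : q = s := Option.some.inj ((oplus_zero q).symm.trans hqt₂)
        rw [hps, hqs]
      · have hμlt1 : μ < 1 := lt_of_le_of_ne hμ1 hμtop
        -- μ' for r₁
        have hμ'ex : ∃ μ', μ < μ' ∧ μ' ≤ 1 ∧ le (ConvexEA.smul μ' t₁) c₁ := by
          cases r₁ with
          | nil =>
            simp only [List.map_nil, osum_nil] at ht₁ hc₁'
            have ht₁0 : t₁ = zero := (Option.some.inj ht₁).symm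
            have hc₁0 : c₁ = zero := (Option.some.inj hc₁').symm
            refine ⟨1, hμlt1, le_rfl, ?_⟩
            rw [ht₁0, hc₁0, ConvexEA.one_smul]
            exact le_refl' zero
          | cons y r =>
            have hy := hcond₁ y (List.mem_cons_of_mem _ (List.mem_cons_self))
            refine ⟨y.1, chain_lt hch₁ y (List.mem_cons_self), hy.1.2, ?_⟩
            refine scale_le
              (fun z hz => (hcond₁ z (List.mem_cons_of_mem _ hz)).1)
              hy.1.1 hy.1.2 ?_ ht₁ hc₁'
            intro z hz
            rcases List.mem_cons.mp hz with h | h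
            · rw [h]
            · exact (chain_lt (chain_tail hch₁) z h).le
        have hν'ex : ∃ ν', μ < ν' ∧ ν' ≤ 1 ∧ le (ConvexEA.smul ν' t₂) c₂ := by
          cases r₂ with
          | nil =>
            simp only [List.map_nil, osum_nil] at ht₂ hc₂'
            have ht₂0 : t₂ = zero := (Option.some.inj ht₂).symm
            have hc₂0 : c₂ = zero := (Option.some.inj hc₂').symm
            refine ⟨1, hμlt1, le_rfl, ?_⟩
            rw [ht₂0, hc₂0, ConvexEA.one_smul]
            exact le_refl' zero
          | cons y r =>
            have hy := hcond₂ y (List.mem_cons_of_mem _ (List.mem_cons_self))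
            refine ⟨y.1, chain_lt hch₂ y (List.mem_cons_self), hy.1.2, ?_⟩
            refine scale_le
              (fun z hz => (hcond₂ z (List.mem_cons_of_mem _ hz)).1)
              hy.1.1 hy.1.2 ?_ ht₂ hc₂'
            intro z hz
            rcases List.mem_cons.mp hz with h | h
            · rw [h]
            · exact (chain_lt (chain_tail hch₂) z h).le
        obtain ⟨μ', hμ'1, hμ'2, hμ'3⟩ := hμ'ex
        obtain ⟨ν', hν'1, hν'2, hν'3⟩ := hν'ex
        obtain ⟨X, hX, hXc⟩ := key_lower hμ0 hμ'1 hμ'2 hpt₁ hmc₁ hμ'3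
        obtain ⟨Y, hY, hcY⟩ := key_upper hμ0 hμ1 hqt₂ hmc₂ hc₂t₂
        obtain ⟨X₂, hX₂, hX₂c⟩ := key_lower hμ0 hν'1 hν'2 hqt₂ hmc₂ hν'3
        obtain ⟨Y₁, hY₁, hcY₁⟩ := key_upper hμ0 hμ1 hpt₁ hmc₁ hc₁t₁
        have h₁₂ : le (ConvexEA.smul (μ' - μ) t₁) (ConvexEA.smul (1 - μ) t₂) :=
          le_cancel' hX (le_trans' hXc hcY) hY
        have h₂₁ : le (ConvexEA.smul (ν' - μ) t₂) (ConvexEA.smul (1 - μ) t₁) :=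
          le_cancel' hX₂ (le_trans' hX₂c hcY₁) hY₁
        have ht₂q : le t₂ (perp q) := le_cancel' hqt₂ (le_one' s) (oplus_perp q)
        have ht₁p : le t₁ (perp p) := le_cancel' hpt₁ (le_one' s) (oplus_perp p)
        have hεt₁ : le (ConvexEA.smul (μ' - μ) t₁) (perp q) :=
          le_trans' (le_trans' h₁₂ (smul_le_self t₂ (by linarith) (by linarith))) ht₂q
        have hεt₂ : le (ConvexEA.smul (ν' - μ) t₂) (perp p) :=
          le_trans' (le_trans' h₂₁ (smul_le_self t₁ (by linarith) (by linarith))) ht₁p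
        have hqperp : SEA.seq (perp q) (perp (perp q)) = zero := by
          rw [perp_perp']
          exact SEA.seq_zero_symm _ _ (sharp_seq_perp hSq)
        have hpperp : SEA.seq (perp p) (perp (perp p)) = zero := by
          rw [perp_perp']
          exact SEA.seq_zero_symm _ _ (sharp_seq_perp hSp)
        obtain ⟨_, _, ht₁q⟩ := core hqperp (show (0:ℝ) < μ' - μ by linarith)
          (by linarith) hεt₁
        obtain ⟨_, _, ht₂p⟩ := core hpperp (show (0:ℝ) < ν' - μ by linarith)
          (by linarith) hεt₂
        have hqt₁0 : SEA.seq q t₁ = zero := by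
          have := seq_mono' q ht₁q
          rw [sharp_seq_perp hSq] at this
          exact le_zero' this
        have hpt₂0 : SEA.seq p t₂ = zero := by
          have := seq_mono' p ht₂p
          rw [sharp_seq_perp hSp] at this
          exact le_zero' this
        have hsperp := seq_perp_of_idem hss
        have hqs : SEA.seq q s = q :=
          (core hsperp one_pos le_rfl (by rw [ConvexEA.one_smul]; exact ⟨t₂, hqt₂⟩)).1
        have hpsq : SEA.seq p s = p :=
          (core hsperp one_pos le_rfl (by rw [ConvexEA.one_smul]; exact ⟨t₁, hpt₁⟩)).1
        have hqp : SEA.seq q p = q := by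
          have key := SEA.seq_oplus q p t₁ s hpt₁
          rw [hqt₁0, hqs] at key
          exact Option.some.inj ((oplus_zero _).symm.trans key)
        have hpq : SEA.seq p q = p := by
          have key := SEA.seq_oplus p q t₂ s hqt₂
          rw [hpt₂0, hpsq] at key
          exact Option.some.inj ((oplus_zero _).symm.trans key)
        have hpqperp : SEA.seq p (perp q) = zero := by
          have key := SEA.seq_oplus p q (perp q) one (oplus_perp q)
          rw [hpq, seq_one'] at key
          exact cancel key (oplus_zero p)
        have hqperpp := SEA.seq_zero_symm _ _ hpqperp
        have hcomm : SEA.seq p (perp q) = SEA.seq (perp q) p := by rw [hpqperp, hqperpp]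
        have hcp := SEA.comm_perp p (perp q) hcomm
        rw [perp_perp'] at hcp
        have hpq_eq : p = q := by rw [← hpq, hcp, hqp]
        subst hpq_eq
        have ht_eq : t₁ = t₂ := cancel hpt₁ hqt₂
        have hc_eq : c₁ = c₂ := cancel hmc₁ hmc₂
        have htt := sub_idem hss (idem_of_sharp hSp) hpt₁
        have hr : r₁ = r₂ := by
          refine ih r₂ t₁ c₁ htt
            (fun z hz => hcond₁ z (List.mem_cons_of_mem _ hz))
            (chain_tail hch₁)
            (fun z hz => hcond₂ z (List.mem_cons_of_mem _ hz))
            (chain_tail hch₂)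
            ht₁ ?_ hc₁' ?_
          · rw [ht_eq]; exact ht₂
          · rw [hc_eq]; exact hc₂'
        rw [hr]

end SeqConvex

end Stmt18Aux


open EffectAlgebra in
/-- in a convex SEA in which every element is simple, reduced
representations are unique. -/
theorem stmt18 {E : Type u} [EffectAlgebra E] [SEA E] [ConvexEA E]
    (hsimple : ∀ a : E, SimpleElem a) :
    ∀ (a : E) (l₁ l₂ : List (ℝ × E)), ReducedRep a l₁ → ReducedRep a l₂ → l₁ = l₂ := by
  intro a l₁ l₂ h₁ h₂
  obtain ⟨⟨hP₁, hsum₁, hval₁⟩, hch₁, hnz₁⟩ := h₁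
  obtain ⟨⟨hP₂, hsum₂, hval₂⟩, hch₂, hnz₂⟩ := h₂
  exact Stmt18Aux.aux l₁ l₂ one a (SEA.one_seq one)
    (fun x hx => ⟨⟨(Set.mem_Icc.mp (hP₁ x hx).1).1, (Set.mem_Icc.mp (hP₁ x hx).1).2⟩,
      (hP₁ x hx).2, hnz₁ x hx⟩)
    hch₁
    (fun x hx => ⟨⟨(Set.mem_Icc.mp (hP₂ x hx).1).1, (Set.mem_Icc.mp (hP₂ x hx).1).2⟩,
      (hP₂ x hx).2, hnz₂ x hx⟩)
    hch₂ hsum₁ hsum₂ hval₁ hval₂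
end
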